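/- arXiv:1410.0195 — 5 statements merged into one kernel-verified Lean document; each statement's English description precedes it below -/
import Mathlib

section
/- In any rank-two root subsystem Ψ of a finite crystallographic root system Φ, the set of positive roots Ψ⁺ = Ψ ∩ Φ⁺ contains at most one pair of elements that are incomparable in the root poset on Φ⁺, and if such a pair exists, its two elements are minimal among all elements of Ψ⁺. -/
open scoped RealInnerProductSpace

/-- A finite crystallographic (reduced) root system in a Euclidean space `V`. -/
structure RootSystemData (V : Type*) [NormedAddCommGroup V] [InnerProductSpace ℝ V] where
  Φ : Set V
  finite : Φ.Finite
  nonzero : ∀ γ ∈ Φ, γ ≠ 0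
  neg_mem : ∀ γ ∈ Φ, -γ ∈ Φ
  reflect_mem : ∀ α ∈ Φ, ∀ β ∈ Φ, β - (2 * ⟪α, β⟫ / ⟪α, α⟫) • α ∈ Φ
  crystallographic : ∀ α ∈ Φ, ∀ β ∈ Φ, ∃ n : ℤ, 2 * ⟪α, β⟫ / ⟪α, α⟫ = (n : ℝ)
  reduced : ∀ γ ∈ Φ, ∀ t : ℝ, t • γ ∈ Φ → t = 1 ∨ t = -1

/-- A base (system of simple roots) for a root system: the simple roots form a basis of `V`
and every root has coordinates that are all nonnegative integers or all nonpositive integers. -/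
structure RootBase {V : Type*} [NormedAddCommGroup V] [InnerProductSpace ℝ V]
    (R : RootSystemData V) (ι : Type*) [Fintype ι] where
  b : Module.Basis ι ℝ V
  simple_mem : ∀ i, b i ∈ R.Φ
  coord_sign : ∀ γ ∈ R.Φ, (∀ i, 0 ≤ b.repr γ i) ∨ (∀ i, b.repr γ i ≤ 0)
  coord_int : ∀ γ ∈ R.Φ, ∀ i, ∃ n : ℤ, b.repr γ i = (n : ℝ)

namespace RootBase

variable {V : Type*} [NormedAddCommGroup V] [InnerProductSpace ℝ V]
  {R : RootSystemData V} {ι : Type*} [Fintype ι]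

/-- `γ` is a positive root. -/
def IsPos (B : RootBase R ι) (γ : V) : Prop := γ ∈ R.Φ ∧ ∀ i, 0 ≤ B.b.repr γ i

/-- The set of positive roots. -/
def Pos (B : RootBase R ι) : Set V := {γ | B.IsPos γ}

/-- The root poset order: coordinatewise comparison over the simple roots. -/
def rle (B : RootBase R ι) (γ γ' : V) : Prop := ∀ i, B.b.repr γ i ≤ B.b.repr γ' i

end RootBase

/-- All roots have the same length. -/
def RootSystemData.SimplyLaced {V : Type*} [NormedAddCommGroup V] [InnerProductSpace ℝ V]
    (R : RootSystemData V) : Prop := ∀ γ ∈ R.Φ, ∀ γ' ∈ R.Φ, ⟪γ, γ⟫ = ⟪γ', γ'⟫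

section Helpers

variable {V : Type*} [NormedAddCommGroup V] [InnerProductSpace ℝ V]
  {R : RootSystemData V} {ι : Type*} [Fintype ι]

private lemma inner_self_pos' {x : V} (hx : x ≠ 0) : 0 < ⟪x, x⟫ :=
  lt_of_le_of_ne real_inner_self_nonneg (Ne.symm (inner_self_ne_zero.mpr hx))

noncomputable def htB (B : RootBase R ι) (γ : V) : ℝ := ∑ i, B.b.repr γ i

private lemma htB_add (B : RootBase R ι) (x y : V) :
    htB B (x + y) = htB B x + htB B y := by
  simp [htB, Finset.sum_add_distrib]

private lemma htB_sub (B : RootBase R ι) (x y : V) :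
    htB B (x - y) = htB B x - htB B y := by
  simp [htB, Finset.sum_sub_distrib]

private lemma htB_smul (B : RootBase R ι) (c : ℝ) (x : V) :
    htB B (c • x) = c * htB B x := by
  simp [htB, Finset.mul_sum]

private lemma pos_ht_pos (B : RootBase R ι) {γ : V} (h : B.IsPos γ) : 0 < htB B γ := by
  have hne : γ ≠ 0 := R.nonzero γ h.1
  have hnn : 0 ≤ htB B γ := Finset.sum_nonneg fun i _ => h.2 i
  rcases hnn.lt_or_eq with h' | h'
  · exact h'
  · exfalso
    have hall : ∀ i ∈ Finset.univ, B.b.repr γ i = 0 := by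
      intro i _
      have := (Finset.sum_eq_zero_iff_of_nonneg (fun i _ => h.2 i)).mp h'.symm
      exact this i (Finset.mem_univ i)
    have hrep : B.b.repr γ = 0 := Finsupp.ext fun i => hall i (Finset.mem_univ i)
    exact hne (B.b.repr.injective (by rw [hrep, map_zero]))

private lemma ht_int (B : RootBase R ι) {γ : V} (hγ : γ ∈ R.Φ) :
    ∃ n : ℤ, htB B γ = (n : ℝ) := by
  choose g hg using B.coord_int γ hγ
  exact ⟨∑ i, g i, by rw [htB]; push_cast; exact Finset.sum_congr rfl fun i _ => hg i⟩

private lemma ht_ge_one (B : RootBase R ι) {γ : V} (h : B.IsPos γ) : 1 ≤ htB B γ := by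
  obtain ⟨n, hn⟩ := ht_int B h.1
  have := pos_ht_pos B h
  rw [hn] at this ⊢
  exact_mod_cast this

private lemma pairing_int (R : RootSystemData V) {α β : V} (hα : α ∈ R.Φ) (hβ : β ∈ R.Φ) :
    ∃ n : ℤ, 2 * ⟪α, β⟫ = (n : ℝ) * ⟪α, α⟫ := by
  obtain ⟨n, hn⟩ := R.crystallographic α hα β hβ
  have hx : ⟪α, α⟫ ≠ 0 := inner_self_ne_zero.mpr (R.nonzero α hα)
  rw [div_eq_iff hx] at hn
  exact ⟨n, hn⟩

private lemma reflect_mem' (R : RootSystemData V) {α β : V} (hα : α ∈ R.Φ) (hβ : β ∈ R.Φ)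
    (n : ℤ) (hn : 2 * ⟪α, β⟫ = (n : ℝ) * ⟪α, α⟫) : β - (n : ℝ) • α ∈ R.Φ := by
  have hx : ⟪α, α⟫ ≠ 0 := inner_self_ne_zero.mpr (R.nonzero α hα)
  have : 2 * ⟪α, β⟫ / ⟪α, α⟫ = (n : ℝ) := by rw [div_eq_iff hx]; exact hn
  have h := R.reflect_mem α hα β hβ
  rwa [this] at h

private lemma cauchy_strict {u v : V} (hu : u ≠ 0) (h : ∀ c : ℝ, v ≠ c • u) :
    ⟪u, v⟫ ^ 2 < ⟪u, u⟫ * ⟪v, v⟫ := by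
  have hx : 0 < ⟪u, u⟫ := inner_self_pos' hu
  have hne : v - (⟪u, v⟫ / ⟪u, u⟫) • u ≠ 0 := sub_ne_zero.mpr (h _)
  have key := inner_self_pos' hne
  have hexp : ⟪v - (⟪u, v⟫ / ⟪u, u⟫) • u, v - (⟪u, v⟫ / ⟪u, u⟫) • u⟫
      = ⟪v, v⟫ - ⟪u, v⟫ ^ 2 / ⟪u, u⟫ := by
    simp only [inner_sub_left, inner_sub_right, real_inner_smul_left, real_inner_smul_right,
      real_inner_comm v u]
    field_simp
    ring
  rw [hexp] at key
  have := (div_lt_iff₀ hx).mp (by linarith : ⟪u, v⟫ ^ 2 / ⟪u, u⟫ < ⟪v, v⟫)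
  linarith [this]

private lemma root_sub (R : RootSystemData V) {α β : V} (hα : α ∈ R.Φ) (hβ : β ∈ R.Φ)
    (hpos : 0 < ⟪α, β⟫) (hnp : ∀ c : ℝ, β ≠ c • α) : β - α ∈ R.Φ := by
  obtain ⟨n, hn⟩ := pairing_int R hα hβ
  obtain ⟨m, hm⟩ := pairing_int R hβ hα
  have hα0 : α ≠ 0 := R.nonzero α hα
  have hβ0 : β ≠ 0 := R.nonzero β hβ
  have hx : 0 < ⟪α, α⟫ := inner_self_pos' hα0
  have hy : 0 < ⟪β, β⟫ := inner_self_pos' hβ0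
  have hba : ⟪β, α⟫ = ⟪α, β⟫ := real_inner_comm α β
  have hnpos : 0 < (n : ℝ) := by
    have h1 : 0 < (n : ℝ) * ⟪α, α⟫ := by rw [← hn]; linarith
    by_contra hcon
    push_neg at hcon
    nlinarith
  have hmpos : 0 < (m : ℝ) := by
    have h1 : 0 < (m : ℝ) * ⟪β, β⟫ := by rw [← hm, hba]; linarith
    by_contra hcon
    push_neg at hcon
    nlinarith
  have hn1 : 1 ≤ n := by exact_mod_cast hnpos
  have hm1 : 1 ≤ m := by exact_mod_cast hmpos
  have hcs := cauchy_strict hα0 hnp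
  have hprod : (n : ℝ) * (m : ℝ) < 4 := by
    have h4 : ((n : ℝ) * ⟪α, α⟫) * ((m : ℝ) * ⟪β, β⟫) = 4 * ⟪α, β⟫ ^ 2 := by
      rw [← hn, ← hm, hba]; ring
    have : (n : ℝ) * (m : ℝ) * (⟪α, α⟫ * ⟪β, β⟫) < 4 * (⟪α, α⟫ * ⟪β, β⟫) := by
      nlinarith [hcs]
    have hxy : 0 < ⟪α, α⟫ * ⟪β, β⟫ := mul_pos hx hy
    nlinarith
  have hnm : n = 1 ∨ m = 1 := by
    have h4 : n * m < 4 := by exact_mod_cast hprod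
    by_contra hcon
    push_neg at hcon
    have : 2 ≤ n := by omega
    have : 2 ≤ m := by omega
    nlinarith
  rcases hnm with h1 | h1
  · have := reflect_mem' R hα hβ n hn
    rw [h1] at this
    simpa using this
  · have := reflect_mem' R hβ hα m hm
    rw [h1] at this
    have h2 := R.neg_mem _ this
    simpa [neg_sub] using h2

private lemma root_add (R : RootSystemData V) {α β : V} (hα : α ∈ R.Φ) (hβ : β ∈ R.Φ)
    (hneg : ⟪α, β⟫ < 0) (hnp : ∀ c : ℝ, β ≠ c • α) : α + β ∈ R.Φ := by
  have h1 : ∀ c : ℝ, (-β) ≠ c • α := by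
    intro c hc
    exact hnp (-c) (by rw [neg_smul, ← hc]; simp)
  have h2 : 0 < ⟪α, -β⟫ := by rw [inner_neg_right]; linarith
  have h3 := root_sub R hα (R.neg_mem β hβ) h2 h1
  have h4 := R.neg_mem _ h3
  have : -(-β - α) = α + β := by abel
  rwa [this] at h4

private lemma pos_smul (B : RootBase R ι) {ψ η : V} (hψ : B.IsPos ψ) (hη : B.IsPos η)
    {c : ℝ} (h : ψ = c • η) : c = 1 := by
  have hred := R.reduced η hη.1 c (h ▸ hψ.1)
  rcases hred with h1 | h1
  · exact h1
  · exfalso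
    have hψh := pos_ht_pos B hψ
    have hηh := pos_ht_pos B hη
    rw [h, h1, htB_smul] at hψh
    linarith

private lemma rle_antisymm (B : RootBase R ι) {x y : V} (h1 : B.rle x y) (h2 : B.rle y x) :
    x = y := by
  have : B.b.repr x = B.b.repr y := Finsupp.ext fun i => le_antisymm (h1 i) (h2 i)
  exact B.b.repr.injective this

private lemma rle_refl (B : RootBase R ι) (x : V) : B.rle x x := fun i => le_refl _

private lemma rle_trans (B : RootBase R ι) {x y z : V} (h1 : B.rle x y) (h2 : B.rle y z) :
    B.rle x z := fun i => le_trans (h1 i) (h2 i)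



end Helpers

private lemma FIN (s t e₁ e₂ b c : ℤ) (hs : 1 ≤ s) (ht : 2 ≤ t) (he₁ : 1 ≤ e₁) (he₂ : 1 ≤ e₂)
    (h3 : e₁ * e₂ ≤ 3) (hA : 2 * s ≤ t * e₁) (hD : 2 * (t - 1) ≤ (s + 1) * e₂)
    (hP : 2 * s * (s + 1) * e₂ + 2 * t * (t - 1) * e₁ ≤ (s * (t - 1) + t * (s + 1)) * e₁ * e₂)
    (hb : b = 2 * t - s * e₂) (hc : c = 2 * (s + 1) - (t - 1) * e₁)
    (hBC : b ≤ t - 1 ∨ (b = t ∧ s = 1)) (hCC : c ≤ s ∨ (c = s + 1 ∧ t = 2)) : False := by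
  have he₁3 : e₁ ≤ 3 := by nlinarith
  have he₂3 : e₂ ≤ 3 := by nlinarith
  interval_cases e₁ <;> interval_cases e₂ <;>
    first
    | omega
    | (have ht10 : t ≤ 10 := by omega
       have hs9 : s ≤ 9 := by omega
       interval_cases s <;> interval_cases t <;> omega)
section CtxSec

variable {V : Type*} [NormedAddCommGroup V] [InnerProductSpace ℝ V]
  {R : RootSystemData V} {ι : Type*} [Fintype ι]

private structure Ctx (B : RootBase R ι) where
  U : Submodule ℝ V
  η₁ : V
  η₂ : V
  hp₁ : B.IsPos η₁
  hu₁ : η₁ ∈ U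
  hp₂ : B.IsPos η₂
  hu₂ : η₂ ∈ U
  huniq : ∀ s t : ℝ, s • η₁ + t • η₂ = 0 → s = 0 ∧ t = 0
  hcone : ∀ ψ : V, B.IsPos ψ → ψ ∈ U → ∃ s t : ℝ, 0 ≤ s ∧ 0 ≤ t ∧ ψ = s • η₁ + t • η₂

namespace Ctx

variable {B : RootBase R ι} (C : Ctx B)

private def Mem (ψ : V) : Prop := B.IsPos ψ ∧ ψ ∈ C.U

private def swap : Ctx B where
  U := C.U
  η₁ := C.η₂
  η₂ := C.η₁
  hp₁ := C.hp₂
  hu₁ := C.hu₂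
  hp₂ := C.hp₁
  hu₂ := C.hu₁
  huniq := fun s t h => by
    have := C.huniq t s (by rw [add_comm]; exact h)
    exact ⟨this.2, this.1⟩
  hcone := fun ψ h1 h2 => by
    obtain ⟨s, t, hs, ht, heq⟩ := C.hcone ψ h1 h2
    exact ⟨t, s, ht, hs, by rw [heq, add_comm]⟩

private lemma mem_swap {ψ : V} (h : C.Mem ψ) : C.swap.Mem ψ := h

private lemma uniq2 {s t s' t' : ℝ}
    (h : s • C.η₁ + t • C.η₂ = s' • C.η₁ + t' • C.η₂) : s = s' ∧ t = t' := by
  have h0 : (s - s') • C.η₁ + (t - t') • C.η₂ = 0 := by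
    rw [sub_smul, sub_smul,
      show s • C.η₁ - s' • C.η₁ + (t • C.η₂ - t' • C.η₂)
        = (s • C.η₁ + t • C.η₂) - (s' • C.η₁ + t' • C.η₂) from by abel, h, sub_self]
  have := C.huniq _ _ h0
  constructor <;> linarith [this.1, this.2]

private lemma sign {χ : V} (hΦ : χ ∈ R.Φ) (hU : χ ∈ C.U) : C.Mem χ ∨ C.Mem (-χ) := by
  rcases B.coord_sign χ hΦ with h | h
  · exact Or.inl ⟨⟨hΦ, h⟩, hU⟩
  · refine Or.inr ⟨⟨R.neg_mem χ hΦ, fun i => ?_⟩, neg_mem hU⟩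
    rw [map_neg, Finsupp.neg_apply]
    linarith [h i]

private lemma coeff_nonneg {ψ : V} (hψ : C.Mem ψ) {s t : ℝ}
    (heq : ψ = s • C.η₁ + t • C.η₂) : 0 ≤ s ∧ 0 ≤ t := by
  obtain ⟨s', t', hs', ht', heq'⟩ := C.hcone ψ hψ.1 hψ.2
  have h : s • C.η₁ + t • C.η₂ = s' • C.η₁ + t' • C.η₂ := by rw [← heq]; exact heq'
  obtain ⟨h1, h2⟩ := C.uniq2 h
  exact ⟨h1 ▸ hs', h2 ▸ ht'⟩

private lemma interior_pos {ψ : V} (hψ : C.Mem ψ) (h1 : ψ ≠ C.η₁) (h2 : ψ ≠ C.η₂)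
    {s t : ℝ} (heq : ψ = s • C.η₁ + t • C.η₂) : 0 < s ∧ 0 < t := by
  obtain ⟨hs, ht⟩ := C.coeff_nonneg hψ heq
  constructor
  · rcases hs.lt_or_eq with h | h
    · exact h
    · exfalso
      have heq' : ψ = t • C.η₂ := by rw [heq, ← h]; simp
      have := pos_smul B hψ.1 C.hp₂ heq'
      rw [this, one_smul] at heq'
      exact h2 heq'
  · rcases ht.lt_or_eq with h | h
    · exact h
    · exfalso
      have heq' : ψ = s • C.η₁ := by rw [heq, ← h]; simp
      have := pos_smul B hψ.1 C.hp₁ heq'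
      rw [this, one_smul] at heq'
      exact h1 heq'

private lemma sub₁ {ψ : V} {s t : ℝ} (hψ : C.Mem ψ) (heq : ψ = s • C.η₁ + t • C.η₂)
    (htpos : 0 < t) (hip : 0 < ⟪C.η₁, ψ⟫) : C.Mem (ψ - C.η₁) := by
  have hnp : ∀ c : ℝ, ψ ≠ c • C.η₁ := by
    intro c hc
    have h : c • C.η₁ + (0 : ℝ) • C.η₂ = s • C.η₁ + t • C.η₂ := by
      rw [← heq, hc]; simp
    have := C.uniq2 h
    linarith [this.2]
  have hroot : ψ - C.η₁ ∈ R.Φ := root_sub R C.hp₁.1 hψ.1.1 hip hnp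
  have hU : ψ - C.η₁ ∈ C.U := sub_mem hψ.2 C.hu₁
  rcases C.sign hroot hU with h | h
  · exact h
  · exfalso
    have heq2 : -(ψ - C.η₁) = (1 - s) • C.η₁ + (-t) • C.η₂ := by rw [heq]; module
    have := C.coeff_nonneg h heq2
    linarith [this.2]

private lemma sub₂ {ψ : V} {s t : ℝ} (hψ : C.Mem ψ) (heq : ψ = s • C.η₁ + t • C.η₂)
    (hspos : 0 < s) (hip : 0 < ⟪C.η₂, ψ⟫) : C.Mem (ψ - C.η₂) := by
  exact C.swap.sub₁ (s := t) (t := s) (C.mem_swap hψ) (by rw [heq, add_comm]; rfl) hspos hip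

private lemma rle_shift {x y : V} {u v : ℝ} (hu : 0 ≤ u) (hv : 0 ≤ v)
    (h : y = x + u • C.η₁ + v • C.η₂) : B.rle x y := by
  intro i
  have hrepr : B.b.repr y i = B.b.repr x i + u * B.b.repr C.η₁ i + v * B.b.repr C.η₂ i := by
    rw [h]
    simp [Finsupp.add_apply, Finsupp.smul_apply, smul_eq_mul]
  rw [hrepr]
  have h1 := C.hp₁.2 i
  have h2 := C.hp₂.2 i
  nlinarith

end Ctx

end CtxSec
section CtxSec2

variable {V : Type*} [NormedAddCommGroup V] [InnerProductSpace ℝ V]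
  {R : RootSystemData V} {ι : Type*} [Fintype ι]

namespace Ctx

variable {B : RootBase R ι} (C : Ctx B)

private lemma chainCore : ∀ n : ℕ, ∀ ψ : V, C.Mem ψ → htB B ψ ≤ (n : ℝ) →
    ψ = C.η₁ ∨ ψ = C.η₂ ∨ (B.rle C.η₁ ψ ∧ B.rle C.η₂ ψ ∧
      ∃ s t : ℤ, 1 ≤ s ∧ 1 ≤ t ∧ ψ = (s : ℝ) • C.η₁ + (t : ℝ) • C.η₂) := by
  intro n
  induction n with
  | zero =>
    intro ψ hψ hht
    exfalso
    have := ht_ge_one B hψ.1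
    norm_num at hht
    linarith
  | succ n IH =>
    intro ψ hψ hht
    by_cases he1 : ψ = C.η₁
    · exact Or.inl he1
    by_cases he2 : ψ = C.η₂
    · exact Or.inr (Or.inl he2)
    right; right
    obtain ⟨s, t, hs0, ht0, heq⟩ := C.hcone ψ hψ.1 hψ.2
    obtain ⟨hs, ht⟩ := C.interior_pos hψ he1 he2 heq
    have hinner : 0 < ⟪C.η₁, ψ⟫ ∨ 0 < ⟪C.η₂, ψ⟫ := by
      by_contra hcon
      push_neg at hcon
      have hself : 0 < ⟪ψ, ψ⟫ := inner_self_pos' (R.nonzero ψ hψ.1.1)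
      have hexpand : ⟪ψ, ψ⟫ = s * ⟪C.η₁, ψ⟫ + t * ⟪C.η₂, ψ⟫ := by
        nth_rewrite 1 [heq]
        rw [inner_add_left, real_inner_smul_left, real_inner_smul_left]
      nlinarith [hcon.1, hcon.2]
    rcases hinner with hip | hip
    · have hρ : C.Mem (ψ - C.η₁) := C.sub₁ hψ heq ht hip
      have hht' : htB B (ψ - C.η₁) ≤ (n : ℝ) := by
        rw [htB_sub]
        have := ht_ge_one B C.hp₁
        push_cast at hht ⊢
        linarith
      rcases IH _ hρ hht' with h | h | h
      · exfalso
        have hψ2 : ψ = (2 : ℝ) • C.η₁ := by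
          have h5 := eq_add_of_sub_eq h
          rw [h5]; module
        have := pos_smul B hψ.1 C.hp₁ hψ2
        norm_num at this
      · have hψeq : ψ = C.η₁ + C.η₂ := (eq_add_of_sub_eq h).trans (add_comm _ _)
        refine ⟨C.rle_shift (u := 0) (v := 1) le_rfl zero_le_one (by rw [hψeq]; module),
          C.rle_shift (u := 1) (v := 0) zero_le_one le_rfl (by rw [hψeq]; module),
          1, 1, le_refl _, le_refl _, by rw [hψeq]; push_cast; module⟩
      · obtain ⟨hr1, hr2, m, k, hm, hk, hρeq⟩ := h
        have hψeq : ψ = ((m : ℝ) + 1) • C.η₁ + (k : ℝ) • C.η₂ := by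
          have h5 : ψ = (m : ℝ) • C.η₁ + (k : ℝ) • C.η₂ + C.η₁ := by
            rw [← hρeq]; abel
          rw [h5]; module
        have hstep : B.rle (ψ - C.η₁) ψ :=
          C.rle_shift (u := 1) (v := 0) zero_le_one le_rfl (by module)
        exact ⟨rle_trans B hr1 hstep, rle_trans B hr2 hstep,
          m + 1, k, by omega, hk, by rw [hψeq]; push_cast; module⟩
    · have hρ : C.Mem (ψ - C.η₂) := C.sub₂ hψ heq hs hip
      have hht' : htB B (ψ - C.η₂) ≤ (n : ℝ) := by
        rw [htB_sub]
        have := ht_ge_one B C.hp₂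
        push_cast at hht ⊢
        linarith
      rcases IH _ hρ hht' with h | h | h
      · have hψeq : ψ = C.η₁ + C.η₂ := eq_add_of_sub_eq h
        refine ⟨C.rle_shift (u := 0) (v := 1) le_rfl zero_le_one (by rw [hψeq]; module),
          C.rle_shift (u := 1) (v := 0) zero_le_one le_rfl (by rw [hψeq]; module),
          1, 1, le_refl _, le_refl _, by rw [hψeq]; push_cast; module⟩
      · exfalso
        have hψ2 : ψ = (2 : ℝ) • C.η₂ := by
          have h5 := eq_add_of_sub_eq h
          rw [h5]; module
        have := pos_smul B hψ.1 C.hp₂ hψ2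
        norm_num at this
      · obtain ⟨hr1, hr2, m, k, hm, hk, hρeq⟩ := h
        have hψeq : ψ = (m : ℝ) • C.η₁ + ((k : ℝ) + 1) • C.η₂ := by
          have h5 : ψ = (m : ℝ) • C.η₁ + (k : ℝ) • C.η₂ + C.η₂ := by
            rw [← hρeq]; abel
          rw [h5]; module
        have hstep : B.rle (ψ - C.η₂) ψ :=
          C.rle_shift (u := 0) (v := 1) le_rfl zero_le_one (by module)
        exact ⟨rle_trans B hr1 hstep, rle_trans B hr2 hstep,
          m, k + 1, hm, by omega, by rw [hψeq]; push_cast; module⟩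

private lemma chain {ψ : V} (hψ : C.Mem ψ) :
    ψ = C.η₁ ∨ ψ = C.η₂ ∨ (B.rle C.η₁ ψ ∧ B.rle C.η₂ ψ ∧
      ∃ s t : ℤ, 1 ≤ s ∧ 1 ≤ t ∧ ψ = (s : ℝ) • C.η₁ + (t : ℝ) • C.η₂) := by
  obtain ⟨k, hk⟩ := ht_int B hψ.1.1
  refine C.chainCore k.toNat ψ hψ ?_
  rw [hk]
  exact_mod_cast Int.self_le_toNat k

private lemma cap {δ : V} {s t b : ℤ} (hδ : C.Mem δ)
    (heq : δ = (s : ℝ) • C.η₁ + (t : ℝ) • C.η₂) (hs : 1 ≤ s) (_ht : 1 ≤ t)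
    (hb : 2 * ⟪C.η₂, δ⟫ = (b : ℝ) * ⟪C.η₂, C.η₂⟫) :
    b ≤ t - 1 ∨ (b = t ∧ s = 1) := by
  by_cases hb1 : b ≤ t - 1
  · exact Or.inl hb1
  push_neg at hb1
  have hχΦ : δ - (b : ℝ) • C.η₂ ∈ R.Φ := reflect_mem' R C.hp₂.1 hδ.1.1 b hb
  have hχU : δ - (b : ℝ) • C.η₂ ∈ C.U := sub_mem hδ.2 (Submodule.smul_mem _ _ C.hu₂)
  have hχeq : δ - (b : ℝ) • C.η₂ = (s : ℝ) • C.η₁ + ((t - b : ℤ) : ℝ) • C.η₂ := by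
    rw [heq]; push_cast; module
  rcases C.sign hχΦ hχU with h | h
  · have hcn := C.coeff_nonneg h hχeq
    have htb : t = b := by
      have : (0 : ℝ) ≤ ((t - b : ℤ) : ℝ) := hcn.2
      have : (0 : ℤ) ≤ t - b := by exact_mod_cast this
      omega
    have hδ1 : δ - (b : ℝ) • C.η₂ = (s : ℝ) • C.η₁ := by
      rw [hχeq, htb]; simp
    have hs1 : (s : ℝ) = 1 := pos_smul B h.1 C.hp₁ hδ1
    have : s = 1 := by exact_mod_cast hs1
    exact Or.inr ⟨htb.symm, this⟩
  · exfalso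
    have heq2 : -(δ - (b : ℝ) • C.η₂) = ((-s : ℤ) : ℝ) • C.η₁ + ((b - t : ℤ) : ℝ) • C.η₂ := by
      rw [heq]; push_cast; module
    have hcn := C.coeff_nonneg h heq2
    have h1 : (0 : ℝ) ≤ ((-s : ℤ) : ℝ) := hcn.1
    have : (0 : ℤ) ≤ -s := by exact_mod_cast h1
    omega

end Ctx

end CtxSec2
section CtxSec3

variable {V : Type*} [NormedAddCommGroup V] [InnerProductSpace ℝ V]
  {R : RootSystemData V} {ι : Type*} [Fintype ι]

namespace Ctx

variable {B : RootBase R ι} (C : Ctx B)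

set_option maxHeartbeats 4000000 in
private lemma crossed : ∀ n : ℕ, ∀ δ δ' : V, ∀ s t s' t' : ℝ, C.Mem δ → C.Mem δ' →
    htB B δ + htB B δ' ≤ (n : ℝ) →
    δ = s • C.η₁ + t • C.η₂ → δ' = s' • C.η₁ + t' • C.η₂ →
    s < s' → t' < t → δ = C.η₂ ∧ δ' = C.η₁ := by
  intro n
  induction n with
  | zero =>
    intro δ δ' s t s' t' hδ hδ' hht _ _ _ _
    exfalso
    have h1 := ht_ge_one B hδ.1
    have h2 := ht_ge_one B hδ'.1
    norm_num at hht
    linarith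
  | succ n IH =>
    intro δ δ' s t s' t' hδ hδ' hht heq heq' hss htt
    rcases C.chain hδ with h1 | h1 | h1
    · exfalso
      have h0 : (1 : ℝ) • C.η₁ + (0 : ℝ) • C.η₂ = s • C.η₁ + t • C.η₂ := by
        rw [← heq, h1]; simp
      obtain ⟨_, ht0⟩ := C.uniq2 h0
      have := (C.coeff_nonneg hδ' heq').2
      linarith
    · have h0 : (0 : ℝ) • C.η₁ + (1 : ℝ) • C.η₂ = s • C.η₁ + t • C.η₂ := by
        rw [← heq, h1]; simp
      obtain ⟨hs0, ht1⟩ := C.uniq2 h0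
      refine ⟨h1, ?_⟩
      rcases C.chain hδ' with h2 | h2 | h2
      · exact h2
      · exfalso
        have h0' : (0 : ℝ) • C.η₁ + (1 : ℝ) • C.η₂ = s' • C.η₁ + t' • C.η₂ := by
          rw [← heq', h2]; simp
        obtain ⟨hs0', _⟩ := C.uniq2 h0'
        linarith
      · exfalso
        obtain ⟨_, _, m, k, _, hk, hmeq⟩ := h2
        have hu := C.uniq2 (show (m : ℝ) • C.η₁ + (k : ℝ) • C.η₂ = s' • C.η₁ + t' • C.η₂
          from by rw [← heq', hmeq])
        have hk1 : (1 : ℝ) ≤ (k : ℝ) := by exact_mod_cast hk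
        linarith [hu.2]
    · exfalso
      obtain ⟨_, _, m, k, hm, hk, hmeq⟩ := h1
      have hmk := C.uniq2 (show (m : ℝ) • C.η₁ + (k : ℝ) • C.η₂ = s • C.η₁ + t • C.η₂
        from by rw [← heq, hmeq])
      rcases C.chain hδ' with h2 | h2 | h2
      · have hu := C.uniq2 (show (1 : ℝ) • C.η₁ + (0 : ℝ) • C.η₂ = s' • C.η₁ + t' • C.η₂
          from by rw [← heq', h2]; simp)
        have hm1 : (1 : ℝ) ≤ (m : ℝ) := by exact_mod_cast hm
        linarith [hu.1, hmk.1]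
      · have hu := C.uniq2 (show (0 : ℝ) • C.η₁ + (1 : ℝ) • C.η₂ = s' • C.η₁ + t' • C.η₂
          from by rw [← heq', h2]; simp)
        have := (C.coeff_nonneg hδ heq).1
        linarith [hu.1]
      · obtain ⟨_, _, m', k', hm', hk', hmeq'⟩ := h2
        have hmk' := C.uniq2 (show (m' : ℝ) • C.η₁ + (k' : ℝ) • C.η₂ = s' • C.η₁ + t' • C.η₂
          from by rw [← heq', hmeq'])
        -- integer versions of the crossing
        have hssR : (m : ℝ) < (m' : ℝ) := by rw [hmk.1, hmk'.1]; exact hss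
        have httR : (k' : ℝ) < (k : ℝ) := by rw [hmk.2, hmk'.2]; exact htt
        have hmmZ : m < m' := by exact_mod_cast hssR
        have hkkZ : k' < k := by exact_mod_cast httR
        have hmR : (1 : ℝ) ≤ (m : ℝ) := by exact_mod_cast hm
        have hkR : (1 : ℝ) ≤ (k : ℝ) := by exact_mod_cast hk
        have hmR' : (1 : ℝ) ≤ (m' : ℝ) := by exact_mod_cast hm'
        have hkR' : (1 : ℝ) ≤ (k' : ℝ) := by exact_mod_cast hk'
        have hδne : δ ≠ 0 := R.nonzero δ hδ.1.1
        have hδ'ne : δ' ≠ 0 := R.nonzero δ' hδ'.1.1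
        have hη₁ne : C.η₁ ≠ 0 := R.nonzero _ C.hp₁.1
        have hη₂ne : C.η₂ ≠ 0 := R.nonzero _ C.hp₂.1
        have hx : 0 < ⟪C.η₁, C.η₁⟫ := inner_self_pos' hη₁ne
        have hy : 0 < ⟪C.η₂, C.η₂⟫ := inner_self_pos' hη₂ne
        have hE21 : ⟪C.η₂, C.η₁⟫ = ⟪C.η₁, C.η₂⟫ := real_inner_comm _ _
        rcases lt_or_ge 0 ⟪δ, δ'⟫ with hPpos | hPle
        · -- difference is a root: contradiction
          have hnp : ∀ c : ℝ, δ ≠ c • δ' := by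
            intro c hc
            have hceq : δ = (c * (m' : ℝ)) • C.η₁ + (c * (k' : ℝ)) • C.η₂ := by
              rw [hc, hmeq']; module
            have hu := C.uniq2 (show (c * (m' : ℝ)) • C.η₁ + (c * (k' : ℝ)) • C.η₂
              = (m : ℝ) • C.η₁ + (k : ℝ) • C.η₂ from by rw [← hceq, hmeq])
            nlinarith [hu.1, hu.2]
          have hip : 0 < ⟪δ', δ⟫ := by rw [real_inner_comm]; exact hPpos
          have hroot : δ - δ' ∈ R.Φ := root_sub R hδ'.1.1 hδ.1.1 hip hnp
          have hU : δ - δ' ∈ C.U := sub_mem hδ.2 hδ'.2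
          rcases C.sign hroot hU with h | h
          · have hceq : δ - δ' = ((m - m' : ℤ) : ℝ) • C.η₁ + ((k - k' : ℤ) : ℝ) • C.η₂ := by
              rw [hmeq, hmeq']; push_cast; module
            have hcn := (C.coeff_nonneg h hceq).1
            have : (0 : ℤ) ≤ m - m' := by exact_mod_cast hcn
            omega
          · have hceq : -(δ - δ') = ((m' - m : ℤ) : ℝ) • C.η₁ + ((k' - k : ℤ) : ℝ) • C.η₂ := by
              rw [hmeq, hmeq']; push_cast; module
            have hcn := (C.coeff_nonneg h hceq).2
            have : (0 : ℤ) ≤ k' - k := by exact_mod_cast hcn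
            omega
        rcases lt_or_ge 0 ⟪C.η₁, δ⟫ with hApos | hAle
        · -- subtract η₁ from δ and recurse
          have hρ : C.Mem (δ - C.η₁) := C.sub₁ hδ hmeq (by linarith) hApos
          have hρeq : δ - C.η₁ = ((m - 1 : ℤ) : ℝ) • C.η₁ + (k : ℝ) • C.η₂ := by
            rw [hmeq]; push_cast; module
          have hht2 : htB B (δ - C.η₁) + htB B δ' ≤ (n : ℝ) := by
            rw [htB_sub]
            have := ht_ge_one B C.hp₁
            push_cast at hht ⊢
            linarith
          have hres := IH (δ - C.η₁) δ' ((m - 1 : ℤ) : ℝ) (k : ℝ) (m' : ℝ) (k' : ℝ)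
            hρ hδ' hht2 hρeq hmeq' (by push_cast; linarith) httR
          have hu := C.uniq2 (show (1 : ℝ) • C.η₁ + (0 : ℝ) • C.η₂
            = (m' : ℝ) • C.η₁ + (k' : ℝ) • C.η₂ from by rw [← hmeq', hres.2]; simp)
          linarith [hu.2]
        rcases lt_or_ge 0 ⟪C.η₂, δ'⟫ with hDpos | hDle
        · -- subtract η₂ from δ' and recurse
          have hρ' : C.Mem (δ' - C.η₂) := C.sub₂ hδ' hmeq' (by linarith) hDpos
          have hρ'eq : δ' - C.η₂ = (m' : ℝ) • C.η₁ + ((k' - 1 : ℤ) : ℝ) • C.η₂ := by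
            rw [hmeq']; push_cast; module
          have hht2 : htB B δ + htB B (δ' - C.η₂) ≤ (n : ℝ) := by
            rw [htB_sub]
            have := ht_ge_one B C.hp₂
            push_cast at hht ⊢
            linarith
          have hres := IH δ (δ' - C.η₂) (m : ℝ) (k : ℝ) (m' : ℝ) ((k' - 1 : ℤ) : ℝ)
            hδ hρ' hht2 hmeq hρ'eq hssR (by push_cast; linarith)
          have hu := C.uniq2 (show (0 : ℝ) • C.η₁ + (1 : ℝ) • C.η₂
            = (m : ℝ) • C.η₁ + (k : ℝ) • C.η₂ from by rw [← hmeq, hres.1]; simp)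
          linarith [hu.1]
        -- final configuration
        have hself : 0 < ⟪δ, δ⟫ := inner_self_pos' hδne
        have hself' : 0 < ⟪δ', δ'⟫ := inner_self_pos' hδ'ne
        have hSelfExp : ⟪δ, δ⟫ = (m : ℝ) * ⟪C.η₁, δ⟫ + (k : ℝ) * ⟪C.η₂, δ⟫ := by
          nth_rewrite 1 [hmeq]
          rw [inner_add_left, real_inner_smul_left, real_inner_smul_left]
        have hSelfExp' : ⟪δ', δ'⟫ = (m' : ℝ) * ⟪C.η₁, δ'⟫ + (k' : ℝ) * ⟪C.η₂, δ'⟫ := by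
          nth_rewrite 1 [hmeq']
          rw [inner_add_left, real_inner_smul_left, real_inner_smul_left]
        have hB : 0 < ⟪C.η₂, δ⟫ := by
          rcases lt_or_ge 0 ⟪C.η₂, δ⟫ with h | h
          · exact h
          · exfalso
            have t1 : (m : ℝ) * ⟪C.η₁, δ⟫ ≤ 0 :=
              mul_nonpos_of_nonneg_of_nonpos (by linarith) hAle
            have t2 : (k : ℝ) * ⟪C.η₂, δ⟫ ≤ 0 :=
              mul_nonpos_of_nonneg_of_nonpos (by linarith) h
            linarith [hself, hSelfExp]
        have hC : 0 < ⟪C.η₁, δ'⟫ := by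
          rcases lt_or_ge 0 ⟪C.η₁, δ'⟫ with h | h
          · exact h
          · exfalso
            have t1 : (m' : ℝ) * ⟪C.η₁, δ'⟫ ≤ 0 :=
              mul_nonpos_of_nonneg_of_nonpos (by linarith) h
            have t2 : (k' : ℝ) * ⟪C.η₂, δ'⟫ ≤ 0 :=
              mul_nonpos_of_nonneg_of_nonpos (by linarith) hDle
            linarith [hself', hSelfExp']
        -- δ - η₂ ∈ Ψpos
        have hρ : C.Mem (δ - C.η₂) := C.sub₂ hδ hmeq (by linarith) hB
        have hρeq : δ - C.η₂ = (m : ℝ) • C.η₁ + ((k - 1 : ℤ) : ℝ) • C.η₂ := by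
          rw [hmeq]; push_cast; module
        have hρ' : C.Mem (δ' - C.η₁) := C.sub₁ hδ' hmeq' (by linarith) hC
        have hρ'eq : δ' - C.η₁ = ((m' - 1 : ℤ) : ℝ) • C.η₁ + (k' : ℝ) • C.η₂ := by
          rw [hmeq']; push_cast; module
        have hkk1 : k' = k - 1 := by
          by_contra hcon
          have hklt : (k' : ℝ) < ((k - 1 : ℤ) : ℝ) := by
            have : k' < k - 1 := by omega
            exact_mod_cast this
          have hht2 : htB B (δ - C.η₂) + htB B δ' ≤ (n : ℝ) := by
            rw [htB_sub]
            have := ht_ge_one B C.hp₂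
            push_cast at hht ⊢
            linarith
          have hres := IH (δ - C.η₂) δ' (m : ℝ) ((k - 1 : ℤ) : ℝ) (m' : ℝ) (k' : ℝ)
            hρ hδ' hht2 hρeq hmeq' hssR hklt
          have hu := C.uniq2 (show (0 : ℝ) • C.η₁ + (1 : ℝ) • C.η₂
            = (m : ℝ) • C.η₁ + ((k - 1 : ℤ) : ℝ) • C.η₂ from by rw [← hρeq, hres.1]; simp)
          linarith [hu.1]
        have hmm1 : m' = m + 1 := by
          by_contra hcon
          have hmlt : (m : ℝ) < ((m' - 1 : ℤ) : ℝ) := by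
            have : m < m' - 1 := by omega
            exact_mod_cast this
          have hht2 : htB B δ + htB B (δ' - C.η₁) ≤ (n : ℝ) := by
            rw [htB_sub]
            have := ht_ge_one B C.hp₁
            push_cast at hht ⊢
            linarith
          have hres := IH δ (δ' - C.η₁) (m : ℝ) (k : ℝ) ((m' - 1 : ℤ) : ℝ) (k' : ℝ)
            hδ hρ' hht2 hmeq hρ'eq hmlt httR
          have hu := C.uniq2 (show (0 : ℝ) • C.η₁ + (1 : ℝ) • C.η₂
            = (m : ℝ) • C.η₁ + (k : ℝ) • C.η₂ from by rw [← hmeq, hres.1]; simp)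
          linarith [hu.1]
        subst hkk1
        subst hmm1
        -- now the integer arithmetic endgame
        have hAx : ⟪C.η₁, δ⟫ = (m : ℝ) * ⟪C.η₁, C.η₁⟫ + (k : ℝ) * ⟪C.η₁, C.η₂⟫ := by
          rw [hmeq, inner_add_right, real_inner_smul_right, real_inner_smul_right]
        have hBx : ⟪C.η₂, δ⟫ = (m : ℝ) * ⟪C.η₁, C.η₂⟫ + (k : ℝ) * ⟪C.η₂, C.η₂⟫ := by
          rw [hmeq, inner_add_right, real_inner_smul_right, real_inner_smul_right, hE21]
        have hCx : ⟪C.η₁, δ'⟫ = ((m + 1 : ℤ) : ℝ) * ⟪C.η₁, C.η₁⟫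
            + ((k - 1 : ℤ) : ℝ) * ⟪C.η₁, C.η₂⟫ := by
          rw [hmeq', inner_add_right, real_inner_smul_right, real_inner_smul_right]
        have hDx : ⟪C.η₂, δ'⟫ = ((m + 1 : ℤ) : ℝ) * ⟪C.η₁, C.η₂⟫
            + ((k - 1 : ℤ) : ℝ) * ⟪C.η₂, C.η₂⟫ := by
          rw [hmeq', inner_add_right, real_inner_smul_right, real_inner_smul_right, hE21]
        have hPx : ⟪δ, δ'⟫ = ((m : ℝ) * ((m + 1 : ℤ) : ℝ)) * ⟪C.η₁, C.η₁⟫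
            + ((m : ℝ) * ((k - 1 : ℤ) : ℝ) + (k : ℝ) * ((m + 1 : ℤ) : ℝ)) * ⟪C.η₁, C.η₂⟫
            + ((k : ℝ) * ((k - 1 : ℤ) : ℝ)) * ⟪C.η₂, C.η₂⟫ := by
          rw [hmeq, hmeq']
          simp only [inner_add_left, inner_add_right, real_inner_smul_left,
            real_inner_smul_right, hE21]
          ring
        set x := ⟪C.η₁, C.η₁⟫ with hxdef
        set y := ⟪C.η₂, C.η₂⟫ with hydef
        set E := ⟪C.η₁, C.η₂⟫ with hEdef
        have hEneg : E < 0 := by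
          have h9 : (m : ℝ) * x + (k : ℝ) * E ≤ 0 := by rw [← hAx]; exact hAle
          rcases lt_or_ge E 0 with h | h
          · exact h
          · exfalso
            have t1 : 0 < (m : ℝ) * x := mul_pos (by linarith) hx
            have t2 : 0 ≤ (k : ℝ) * E := mul_nonneg (by linarith) h
            linarith
        obtain ⟨p, hp⟩ := pairing_int R C.hp₁.1 C.hp₂.1
        obtain ⟨q, hq0⟩ := pairing_int R C.hp₂.1 C.hp₁.1
        have hq : 2 * E = (q : ℝ) * y := by rw [← hq0, hE21]
        have hpneg : p ≤ -1 := by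
          have h1 : (p : ℝ) * x < 0 := by rw [← hp]; linarith
          have h2 : (p : ℝ) < 0 := by nlinarith
          have h3 : p < 0 := by exact_mod_cast h2
          omega
        have hqneg : q ≤ -1 := by
          have h1 : (q : ℝ) * y < 0 := by rw [← hq]; linarith
          have h2 : (q : ℝ) < 0 := by nlinarith
          have h3 : q < 0 := by exact_mod_cast h2
          omega
        have hnp12 : ∀ c : ℝ, C.η₂ ≠ c • C.η₁ := by
          intro c hc
          have h0 : c • C.η₁ + (-1 : ℝ) • C.η₂ = 0 := by rw [← hc]; simp
          have := C.huniq _ _ h0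
          norm_num at this
        have hcs : E ^ 2 < x * y := cauchy_strict hη₁ne hnp12
        have hpq3 : p * q ≤ 3 := by
          have hr : ((p : ℝ) * q) * (x * y) = 4 * E ^ 2 := by
            have h5 : ((p : ℝ) * x) * ((q : ℝ) * y) = (2 * E) * (2 * E) := by rw [← hp, ← hq]
            nlinarith [h5]
          have h6 : ((p : ℝ) * q) < 4 := by nlinarith [mul_pos hx hy]
          have h7 : (p * q : ℤ) < 4 := by exact_mod_cast h6
          omega
        have hpq_pos : 0 < p * q := by
          nlinarith [mul_pos (show (0:ℤ) < -p by omega) (show (0:ℤ) < -q by omega)]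
        have hA2 : 2 * m + k * p ≤ 0 := by
          have hreal : ((2 * m + k * p : ℤ) : ℝ) * x = 2 * ⟪C.η₁, δ⟫ := by
            rw [hAx]; push_cast; linear_combination (-(k : ℝ)) * hp
          have h2 : ((2 * m + k * p : ℤ) : ℝ) * x ≤ 0 := by rw [hreal]; linarith
          have h3 : ((2 * m + k * p : ℤ) : ℝ) ≤ 0 := by nlinarith
          exact_mod_cast h3
        have hD2 : 2 * (k - 1) + (m + 1) * q ≤ 0 := by
          have hreal : ((2 * (k - 1) + (m + 1) * q : ℤ) : ℝ) * y = 2 * ⟪C.η₂, δ'⟫ := by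
            rw [hDx]; push_cast; linear_combination (-((m : ℝ) + 1)) * hq
          have h2 : ((2 * (k - 1) + (m + 1) * q : ℤ) : ℝ) * y ≤ 0 := by rw [hreal]; linarith
          have h3 : ((2 * (k - 1) + (m + 1) * q : ℤ) : ℝ) ≤ 0 := by nlinarith
          exact_mod_cast h3
        have hbrZ : 0 ≤ 2 * m * (m + 1) * q + 2 * k * (k - 1) * p
            + (m * (k - 1) + k * (m + 1)) * (p * q) := by
          have hbr : ((p * q : ℤ) : ℝ) * ⟪δ, δ'⟫
              = E * (((2 * m * (m + 1) * q + 2 * k * (k - 1) * p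
                + (m * (k - 1) + k * (m + 1)) * (p * q) : ℤ)) : ℝ) := by
            rw [hPx]; push_cast
            linear_combination (-((m : ℝ) * ((m : ℝ) + 1) * (q : ℝ))) * hp
              + (-((k : ℝ) * ((k : ℝ) - 1) * (p : ℝ))) * hq
          have h1 : ((p * q : ℤ) : ℝ) * ⟪δ, δ'⟫ ≤ 0 := by
            have : (0 : ℝ) < ((p * q : ℤ) : ℝ) := by exact_mod_cast hpq_pos
            nlinarith
          rw [hbr] at h1
          have h2 : (0 : ℝ) ≤ (((2 * m * (m + 1) * q + 2 * k * (k - 1) * p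
              + (m * (k - 1) + k * (m + 1)) * (p * q) : ℤ)) : ℝ) := by nlinarith
          exact_mod_cast h2
        -- pairing of δ with η₂ and δ' with η₁
        obtain ⟨bz, hbz⟩ := pairing_int R C.hp₂.1 hδ.1.1
        obtain ⟨cz, hcz⟩ := pairing_int R C.hp₁.1 hδ'.1.1
        have hBC := C.cap hδ hmeq hm hk hbz
        have hCC := C.swap.cap (s := (k - 1 : ℤ)) (t := (m + 1 : ℤ)) (b := cz)
          (C.mem_swap hδ') (by rw [hmeq', add_comm]; rfl) (by omega) (by omega) hcz
        have hbz_lin : bz = 2 * k + m * q := by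
          have hreal : ((bz - (2 * k + m * q) : ℤ) : ℝ) * y = 0 := by
            push_cast
            linear_combination (-1 : ℝ) * hbz + 2 * hBx + (m : ℝ) * hq
          have h2 : ((bz - (2 * k + m * q) : ℤ) : ℝ) = 0 := by
            rcases mul_eq_zero.mp hreal with h | h
            · exact h
            · exact absurd h hy.ne'
          have h3 : bz - (2 * k + m * q) = 0 := by exact_mod_cast h2
          omega
        have hcz_lin : cz = 2 * (m + 1) + (k - 1) * p := by
          push_cast at hCx
          have hreal : ((cz - (2 * (m + 1) + (k - 1) * p) : ℤ) : ℝ) * x = 0 := by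
            push_cast
            linear_combination (-1 : ℝ) * hcz + 2 * hCx + ((k : ℝ) - 1) * hp
          have h2 : ((cz - (2 * (m + 1) + (k - 1) * p) : ℤ) : ℝ) = 0 := by
            rcases mul_eq_zero.mp hreal with h | h
            · exact h
            · exact absurd h hx.ne'
          have h3 : cz - (2 * (m + 1) + (k - 1) * p) = 0 := by exact_mod_cast h2
          omega
        -- apply the arithmetic lemma
        refine FIN m k (-p) (-q) bz cz hm (by omega) (by omega) (by omega)
          (by nlinarith) (by linarith) (by linarith) (by nlinarith)
          (by linear_combination hbz_lin) (by linear_combination hcz_lin)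
          ?_ ?_
        · rcases hBC with h | h
          · exact Or.inl (by omega)
          · exact Or.inr ⟨h.1, h.2⟩
        · rcases hCC with h | h
          · exact Or.inl (by omega)
          · exact Or.inr ⟨by omega, by omega⟩

private lemma crossedW {δ δ' : V} {s t s' t' : ℝ} (hδ : C.Mem δ) (hδ' : C.Mem δ')
    (heq : δ = s • C.η₁ + t • C.η₂) (heq' : δ' = s' • C.η₁ + t' • C.η₂)
    (hss : s < s') (htt : t' < t) : δ = C.η₂ ∧ δ' = C.η₁ := by
  obtain ⟨k1, hk1⟩ := ht_int B hδ.1.1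
  obtain ⟨k2, hk2⟩ := ht_int B hδ'.1.1
  refine C.crossed (k1 + k2).toNat δ δ' s t s' t' hδ hδ' ?_ heq heq' hss htt
  rw [hk1, hk2]
  have h5 : (k1 + k2 : ℤ) ≤ ((k1 + k2).toNat : ℤ) := Int.self_le_toNat _
  push_cast
  exact_mod_cast h5

end Ctx

end CtxSec3
section CtxSec4

variable {V : Type*} [NormedAddCommGroup V] [InnerProductSpace ℝ V]
  {R : RootSystemData V} {ι : Type*} [Fintype ι]

namespace Ctx

variable {B : RootBase R ι} (C : Ctx B)

private lemma pairext {p q : V} (hp : C.Mem p) (hq : C.Mem q)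
    (h1 : ¬ B.rle p q) (h2 : ¬ B.rle q p) :
    (p = C.η₁ ∧ q = C.η₂) ∨ (p = C.η₂ ∧ q = C.η₁) := by
  rcases C.chain hp with ha | ha | ha
  · rcases C.chain hq with hb | hb | hb
    · exact absurd (show B.rle p q from by rw [ha, hb]; exact rle_refl B _) h1
    · exact Or.inl ⟨ha, hb⟩
    · exact absurd (show B.rle p q from ha ▸ hb.1) h1
  · rcases C.chain hq with hb | hb | hb
    · exact Or.inr ⟨ha, hb⟩
    · exact absurd (show B.rle p q from by rw [ha, hb]; exact rle_refl B _) h1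
    · exact absurd (show B.rle p q from ha ▸ hb.2.1) h1
  · exfalso
    obtain ⟨hpa, hpb, m, k, hm, hk, hpeq⟩ := ha
    rcases C.chain hq with hb | hb | hb
    · exact h2 (hb ▸ hpa)
    · exact h2 (hb ▸ hpb)
    · obtain ⟨hqa, hqb, m', k', hm', hk', hqeq⟩ := hb
      rcases le_or_gt m m' with hmm | hmm
      · rcases le_or_gt k k' with hkk | hkk
        · refine h1 (C.rle_shift (u := ((m' - m : ℤ) : ℝ)) (v := ((k' - k : ℤ) : ℝ))
            (by exact_mod_cast sub_nonneg.mpr hmm) (by exact_mod_cast sub_nonneg.mpr hkk) ?_)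
          rw [hpeq, hqeq]; push_cast; module
        · rcases eq_or_lt_of_le hmm with heqm | hlt
          · refine h2 (C.rle_shift (u := ((m - m' : ℤ) : ℝ)) (v := ((k - k' : ℤ) : ℝ))
              (by exact_mod_cast sub_nonneg.mpr (le_of_eq heqm.symm))
              (by exact_mod_cast sub_nonneg.mpr hkk.le) ?_)
            rw [hpeq, hqeq]; push_cast; module
          · have hres := C.crossedW hp hq hpeq hqeq (by exact_mod_cast hlt)
              (by exact_mod_cast hkk)
            have hu := C.uniq2 (show (0 : ℝ) • C.η₁ + (1 : ℝ) • C.η₂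
              = (m : ℝ) • C.η₁ + (k : ℝ) • C.η₂ from by rw [← hpeq, hres.1]; simp)
            have hm1 : (1 : ℝ) ≤ (m : ℝ) := by exact_mod_cast hm
            linarith [hu.1]
      · rcases le_or_gt k' k with hkk | hkk
        · refine h2 (C.rle_shift (u := ((m - m' : ℤ) : ℝ)) (v := ((k - k' : ℤ) : ℝ))
            (by exact_mod_cast sub_nonneg.mpr hmm.le)
            (by exact_mod_cast sub_nonneg.mpr hkk) ?_)
          rw [hpeq, hqeq]; push_cast; module
        · have hres := C.crossedW hq hp hqeq hpeq (by exact_mod_cast hmm)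
            (by exact_mod_cast hkk)
          have hu := C.uniq2 (show (0 : ℝ) • C.η₁ + (1 : ℝ) • C.η₂
            = (m' : ℝ) • C.η₁ + (k' : ℝ) • C.η₂ from by rw [← hqeq, hres.1]; simp)
          have hm1 : (1 : ℝ) ≤ (m' : ℝ) := by exact_mod_cast hm'
          linarith [hu.1]

private lemma chain3 {ψ : V} (hψ : C.Mem ψ) :
    ψ = C.η₁ ∨ ψ = C.η₂ ∨ (B.rle C.η₁ ψ ∧ B.rle C.η₂ ψ) := by
  rcases C.chain hψ with h | h | h
  · exact Or.inl h
  · exact Or.inr (Or.inl h)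
  · exact Or.inr (Or.inr ⟨h.1, h.2.1⟩)

end Ctx

end CtxSec4
set_option maxHeartbeats 1000000 in
/-- Any rank two subsystem of Φ contains at most one pair of positive roots that are
incomparable in the root poset on Φ⁺; if they exist, these two elements are minimal among
all positive roots in the subsystem. -/
theorem rank_two_incomparable {V : Type*} [NormedAddCommGroup V] [InnerProductSpace ℝ V]
    {ι : Type*} [Fintype ι] (R : RootSystemData V) (B : RootBase R ι)
    (S : Set V) (hS : S ⊆ R.Φ)
    (hrank : Module.finrank ℝ (Submodule.span ℝ S) = 2)
    (Ψpos : Set V) (hΨ : Ψpos = B.Pos ∩ (Submodule.span ℝ S : Set V)) :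
    ∀ γ₁ ∈ Ψpos, ∀ γ₂ ∈ Ψpos, (¬ B.rle γ₁ γ₂ ∧ ¬ B.rle γ₂ γ₁) →
      ((∀ δ₁ ∈ Ψpos, ∀ δ₂ ∈ Ψpos, (¬ B.rle δ₁ δ₂ ∧ ¬ B.rle δ₂ δ₁) →
          ({δ₁, δ₂} : Set V) = {γ₁, γ₂}) ∧
        (∀ δ ∈ Ψpos, B.rle δ γ₁ → δ = γ₁) ∧
        (∀ δ ∈ Ψpos, B.rle δ γ₂ → δ = γ₂)) := by
  intro γ₁ hγ₁ γ₂ hγ₂ hinc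
  set U : Submodule ℝ V := Submodule.span ℝ S with hUdef
  have hSfin : S.Finite := R.finite.subset hS
  have hfd : FiniteDimensional ℝ U := FiniteDimensional.span_of_finite ℝ hSfin
  have hmem : ∀ ψ, ψ ∈ Ψpos ↔ (B.IsPos ψ ∧ ψ ∈ U) := by
    intro ψ
    rw [hΨ]
    exact ⟨fun h => ⟨h.1, h.2⟩, fun h => ⟨h.1, h.2⟩⟩
  obtain ⟨hγ₁p, hγ₁U⟩ := (hmem γ₁).mp hγ₁
  obtain ⟨hγ₂p, hγ₂U⟩ := (hmem γ₂).mp hγ₂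
  have hne12 : γ₁ ≠ γ₂ := fun h => hinc.1 (h ▸ rle_refl B γ₁)
  have huniqγ : ∀ a b : ℝ, a • γ₁ + b • γ₂ = 0 → a = 0 ∧ b = 0 := by
    intro a b hab
    by_cases hb : b = 0
    · subst hb
      refine ⟨?_, rfl⟩
      rw [zero_smul, add_zero] at hab
      rcases smul_eq_zero.mp hab with h | h
      · exact h
      · exact absurd h (R.nonzero γ₁ hγ₁p.1)
    · exfalso
      have h1 : b • γ₂ = -(a • γ₁) := by
        rw [eq_neg_iff_add_eq_zero, add_comm]; exact hab
      have h2 : γ₂ = (-a / b) • γ₁ := by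
        calc γ₂ = (b⁻¹ * b) • γ₂ := by rw [inv_mul_cancel₀ hb, one_smul]
          _ = b⁻¹ • (b • γ₂) := by rw [mul_smul]
          _ = b⁻¹ • (-(a • γ₁)) := by rw [h1]
          _ = (-a / b) • γ₁ := by
              rw [smul_neg, smul_smul, ← neg_smul]
              congr 1
              field_simp
      have hc := pos_smul B hγ₂p hγ₁p h2
      rw [hc, one_smul] at h2
      exact hne12 h2.symm
  have hli : LinearIndependent ℝ ![γ₁, γ₂] := LinearIndependent.pair_iff.mpr huniqγ
  have hrange : Set.range ![γ₁, γ₂] = {γ₁, γ₂} := by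
    ext z
    simp [Fin.exists_fin_two, or_comm]
  have hpairU : Submodule.span ℝ ({γ₁, γ₂} : Set V) = U := by
    apply Submodule.eq_of_le_of_finrank_le
    · rw [Submodule.span_le]
      intro z hz
      simp only [Set.mem_insert_iff, Set.mem_singleton_iff] at hz
      rcases hz with rfl | rfl
      · exact hγ₁U
      · exact hγ₂U
    · rw [hrank, ← hrange, finrank_span_eq_card hli]
      simp
  have hcoeffγ : ∀ ψ : V, ψ ∈ U → ∃ a b : ℝ, ψ = a • γ₁ + b • γ₂ := by
    intro ψ hh
    rw [← hpairU] at hh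
    obtain ⟨a, b, hab⟩ := Submodule.mem_span_pair.mp hh
    exact ⟨a, b, hab.symm⟩
  have hcof : ∀ ψ : V, ∃ pq : ℝ × ℝ, ψ ∈ U → ψ = pq.1 • γ₁ + pq.2 • γ₂ := by
    intro ψ
    by_cases hh : ψ ∈ U
    · obtain ⟨a, b, hab⟩ := hcoeffγ ψ hh
      exact ⟨(a, b), fun _ => hab⟩
    · exact ⟨(0, 0), fun h' => absurd h' hh⟩
  choose co hco using hcof
  have huγ2 : ∀ a b a' b' : ℝ, a • γ₁ + b • γ₂ = a' • γ₁ + b' • γ₂ → a = a' ∧ b = b' := by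
    intro a b a' b' h
    have h0 : (a - a') • γ₁ + (b - b') • γ₂ = 0 := by
      rw [sub_smul, sub_smul,
        show a • γ₁ - a' • γ₁ + (b • γ₂ - b' • γ₂)
          = (a • γ₁ + b • γ₂) - (a' • γ₁ + b' • γ₂) from by abel, h, sub_self]
    have := huniqγ _ _ h0
    constructor <;> linarith [this.1, this.2]
  have hΨΦ : Ψpos ⊆ R.Φ := fun z hz => ((hmem z).mp hz).1.1
  have hΨfin : Ψpos.Finite := R.finite.subset hΨΦ
  set F : Finset V := hΨfin.toFinset with hF
  have hmemF : ∀ z, z ∈ F ↔ z ∈ Ψpos := fun z => Set.Finite.mem_toFinset _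
  set key : V → ℝ := fun ψ => (co ψ).2 / htB B ψ with hkeydef
  have hf : ∀ ψ ∈ Ψpos, htB B ψ = (co ψ).1 * htB B γ₁ + (co ψ).2 * htB B γ₂ := by
    intro ψ hψ
    conv_lhs => rw [hco ψ ((hmem ψ).mp hψ).2]
    rw [htB_add, htB_smul, htB_smul]
  have hf₁ : 0 < htB B γ₁ := pos_ht_pos B hγ₁p
  have hf₂ : 0 < htB B γ₂ := pos_ht_pos B hγ₂p
  have hfpos : ∀ ψ ∈ Ψpos, 0 < htB B ψ := fun ψ hψ => pos_ht_pos B ((hmem ψ).mp hψ).1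
  have hcr : ∀ ψ ∈ Ψpos, ∀ χ ∈ Ψpos, key ψ ≤ key χ →
      (co ψ).2 * (co χ).1 ≤ (co ψ).1 * (co χ).2 := by
    intro ψ hψ χ hχ hle
    have h1 := hfpos ψ hψ
    have h2 := hfpos χ hχ
    have h3 : (co ψ).2 * htB B χ ≤ (co χ).2 * htB B ψ := by
      rw [hkeydef] at hle
      simp only at hle
      rw [div_le_div_iff₀ h1 h2] at hle
      exact hle
    rw [hf ψ hψ, hf χ hχ] at h3
    have h4 : (co ψ).2 * (co χ).1 * htB B γ₁ ≤ (co ψ).1 * (co χ).2 * htB B γ₁ := by nlinarith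
    exact le_of_mul_le_mul_right h4 hf₁
  have hcrs : ∀ ψ ∈ Ψpos, ∀ χ ∈ Ψpos, key ψ < key χ →
      (co ψ).2 * (co χ).1 < (co ψ).1 * (co χ).2 := by
    intro ψ hψ χ hχ hle
    have h1 := hfpos ψ hψ
    have h2 := hfpos χ hχ
    have h3 : (co ψ).2 * htB B χ < (co χ).2 * htB B ψ := by
      rw [hkeydef] at hle
      simp only at hle
      rw [div_lt_div_iff₀ h1 h2] at hle
      exact hle
    rw [hf ψ hψ, hf χ hχ] at h3
    have h4 : (co ψ).2 * (co χ).1 * htB B γ₁ < (co ψ).1 * (co χ).2 * htB B γ₁ := by nlinarith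
    exact lt_of_mul_lt_mul_right h4 hf₁.le
  have hFne : F.Nonempty := ⟨γ₁, (hmemF γ₁).mpr hγ₁⟩
  obtain ⟨η₂, hη₂F, hmax⟩ := F.exists_max_image key hFne
  obtain ⟨η₁, hη₁F, hmin⟩ := F.exists_min_image key hFne
  have hη₂Ψ := (hmemF η₂).mp hη₂F
  have hη₁Ψ := (hmemF η₁).mp hη₁F
  obtain ⟨hη₂p, hη₂U⟩ := (hmem η₂).mp hη₂Ψ
  obtain ⟨hη₁p, hη₁U⟩ := (hmem η₁).mp hη₁Ψ
  have hcoγ₁ : (co γ₁).1 = 1 ∧ (co γ₁).2 = 0 := by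
    have h1 := hco γ₁ hγ₁U
    have := huγ2 (co γ₁).1 (co γ₁).2 1 0 (by rw [← h1]; simp)
    exact this
  have hcoγ₂ : (co γ₂).1 = 0 ∧ (co γ₂).2 = 1 := by
    have h1 := hco γ₂ hγ₂U
    have := huγ2 (co γ₂).1 (co γ₂).2 0 1 (by rw [← h1]; simp)
    exact this
  have hkeyγ₁ : key γ₁ = 0 := by
    rw [hkeydef]; simp only; rw [hcoγ₁.2]; simp
  have hkeyγ₂ : 0 < key γ₂ := by
    rw [hkeydef]; simp only; rw [hcoγ₂.2]; positivity
  have hstrict : key η₁ < key η₂ := by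
    have h1 := hmin γ₁ ((hmemF γ₁).mpr hγ₁)
    have h2 := hmax γ₂ ((hmemF γ₂).mpr hγ₂)
    linarith [hkeyγ₁ ▸ h1, h2, hkeyγ₂]
  have hΔ : 0 < (co η₁).1 * (co η₂).2 - (co η₁).2 * (co η₂).1 := by
    have := hcrs η₁ hη₁Ψ η₂ hη₂Ψ hstrict
    linarith
  have hconeC : ∀ ψ : V, B.IsPos ψ → ψ ∈ U → ∃ a b : ℝ, 0 ≤ a ∧ 0 ≤ b ∧ ψ = a • η₁ + b • η₂ := by
    intro ψ hp hu
    have hψΨ : ψ ∈ Ψpos := (hmem ψ).mpr ⟨hp, hu⟩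
    have hnum1 : 0 ≤ (co ψ).1 * (co η₂).2 - (co ψ).2 * (co η₂).1 := by
      have := hcr ψ hψΨ η₂ hη₂Ψ (hmax ψ ((hmemF ψ).mpr hψΨ))
      linarith
    have hnum2 : 0 ≤ (co η₁).1 * (co ψ).2 - (co η₁).2 * (co ψ).1 := by
      have := hcr η₁ hη₁Ψ ψ hψΨ (hmin ψ ((hmemF ψ).mpr hψΨ))
      linarith
    have h1 := hco ψ hu
    have h2 := hco η₁ hη₁U
    have h3 := hco η₂ hη₂U
    set Aψ := (co ψ).1 with hAψ
    set Bψ := (co ψ).2 with hBψ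
    set A1 := (co η₁).1 with hA1
    set B1 := (co η₁).2 with hB1
    set A2 := (co η₂).1 with hA2
    set B2 := (co η₂).2 with hB2
    have hΔ' : 0 < A1 * B2 - B1 * A2 := hΔ
    have hΔne : A1 * B2 - B1 * A2 ≠ 0 := ne_of_gt hΔ'
    refine ⟨(Aψ * B2 - Bψ * A2) / (A1 * B2 - B1 * A2),
      (A1 * Bψ - B1 * Aψ) / (A1 * B2 - B1 * A2), ?_, ?_, ?_⟩
    · positivity
    · positivity
    · rw [h1, h2, h3]
      match_scalars
      · have hinv := mul_inv_cancel₀ hΔne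
        field_simp
        linear_combination (-Aψ) * hinv
      · have hinv := mul_inv_cancel₀ hΔne
        field_simp
        linear_combination (-Bψ) * hinv
  have huniqC : ∀ a b : ℝ, a • η₁ + b • η₂ = 0 → a = 0 ∧ b = 0 := by
    intro a b hab
    have h2 := hco η₁ hη₁U
    have h3 := hco η₂ hη₂U
    set A1 := (co η₁).1 with hA1
    set B1 := (co η₁).2 with hB1
    set A2 := (co η₂).1 with hA2
    set B2 := (co η₂).2 with hB2
    have hΔ' : 0 < A1 * B2 - B1 * A2 := hΔ
    have h4 : a • η₁ + b • η₂ = (a * A1 + b * A2) • γ₁ + (a * B1 + b * B2) • γ₂ := by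
      rw [h2, h3]; module
    have h5 : (a * A1 + b * A2) • γ₁ + (a * B1 + b * B2) • γ₂ = 0 := by
      rw [← h4]; exact hab
    obtain ⟨e1, e2⟩ := huniqγ _ _ h5
    have ha0 : a * (A1 * B2 - B1 * A2) = 0 := by
      linear_combination B2 * e1 - A2 * e2
    have ha : a = 0 := by
      rcases mul_eq_zero.mp ha0 with h | h
      · exact h
      · exact absurd h (ne_of_gt hΔ')
    subst ha
    refine ⟨rfl, ?_⟩
    simp only [zero_smul, zero_add] at hab
    rcases smul_eq_zero.mp hab with h | h
    · exact h
    · exact absurd h (R.nonzero η₂ hη₂p.1)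
  let C : Ctx B := ⟨U, η₁, η₂, hη₁p, hη₁U, hη₂p, hη₂U, huniqC, hconeC⟩
  have hC1 : C.η₁ = η₁ := rfl
  have hC2 : C.η₂ = η₂ := rfl
  have hpairmem : ∀ z, z ∈ Ψpos → C.Mem z := fun z hz => (hmem z).mp hz
  have hγid : (γ₁ = η₁ ∧ γ₂ = η₂) ∨ (γ₁ = η₂ ∧ γ₂ = η₁) := by
    have := C.pairext (hpairmem γ₁ hγ₁) (hpairmem γ₂ hγ₂) hinc.1 hinc.2
    rwa [hC1, hC2] at this
  have hmain : ∀ δ, δ ∈ Ψpos → δ = η₁ ∨ δ = η₂ ∨ (B.rle η₁ δ ∧ B.rle η₂ δ) := by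
    intro δ hδ
    have := C.chain3 (hpairmem δ hδ)
    rwa [hC1, hC2] at this
  refine ⟨?_, ?_, ?_⟩
  · intro δ₁ h1 δ₂ h2 hi
    have hd : (δ₁ = η₁ ∧ δ₂ = η₂) ∨ (δ₁ = η₂ ∧ δ₂ = η₁) := by
      have := C.pairext (hpairmem δ₁ h1) (hpairmem δ₂ h2) hi.1 hi.2
      rwa [hC1, hC2] at this
    have hset1 : ({δ₁, δ₂} : Set V) = {η₁, η₂} := by
      rcases hd with ⟨r1, r2⟩ | ⟨r1, r2⟩
      · rw [r1, r2]
      · rw [r1, r2]; exact Set.pair_comm _ _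
    have hset2 : ({γ₁, γ₂} : Set V) = {η₁, η₂} := by
      rcases hγid with ⟨r1, r2⟩ | ⟨r1, r2⟩
      · rw [r1, r2]
      · rw [r1, r2]; exact Set.pair_comm _ _
    rw [hset1, hset2]
  · intro δ hδΨ hdle
    rcases hγid with ⟨r1, r2⟩ | ⟨r1, r2⟩
    · rcases hmain δ hδΨ with h | h | h
      · exact h.trans r1.symm
      · exfalso
        exact hinc.2 (by rw [r2, ← h]; exact hdle)
      · exact rle_antisymm B hdle (r1.symm ▸ h.1)
    · rcases hmain δ hδΨ with h | h | h
      · exfalso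
        exact hinc.2 (by rw [r2, ← h]; exact hdle)
      · exact h.trans r1.symm
      · exact rle_antisymm B hdle (r1.symm ▸ h.2)
  · intro δ hδΨ hdle
    rcases hγid with ⟨r1, r2⟩ | ⟨r1, r2⟩
    · rcases hmain δ hδΨ with h | h | h
      · exfalso
        exact hinc.1 (by rw [r1, ← h]; exact hdle)
      · exact h.trans r2.symm
      · exact rle_antisymm B hdle (r2.symm ▸ h.2)
    · rcases hmain δ hδΨ with h | h | h
      · exact h.trans r2.symm
      · exfalso
        exact hinc.1 (by rw [r1, ← h]; exact hdle)
      · exact rle_antisymm B hdle (r2.symm ▸ h.1)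
end

section
/- Let Φ be a simply laced finite crystallographic root system and suppose [β₁, β₂] is a nonempty chain in the root poset for distinct positive roots β₁ < β₂. Then β₂ − β₁ is a positive root. -/
open scoped RealInnerProductSpace

section Helpers

variable {V : Type*} [NormedAddCommGroup V] [InnerProductSpace ℝ V]
  {R : RootSystemData V} {ι : Type*} [Fintype ι]

private lemma root_inner_self_pos {γ : V} (h : γ ∈ R.Φ) : 0 < ⟪γ, γ⟫ :=
  lt_of_le_of_ne real_inner_self_nonneg (fun h' => R.nonzero γ h (inner_self_eq_zero.mp h'.symm))

private lemma two_inner_le (hSL : R.SimplyLaced) {α β : V} (ha : α ∈ R.Φ) (hb : β ∈ R.Φ)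
    (hne : β ≠ α) : 2 * ⟪α, β⟫ ≤ ⟪α, α⟫ := by
  obtain ⟨n, hn⟩ := R.crystallographic α ha β hb
  have hN : 0 < ⟪α, α⟫ := root_inner_self_pos ha
  rw [div_eq_iff hN.ne'] at hn
  by_contra h
  push_neg at h
  have h1 : (1 : ℝ) < (n : ℝ) := by nlinarith
  have h2 : (2 : ℤ) ≤ n := by
    have : (1:ℤ) < n := by exact_mod_cast h1
    omega
  have h2' : (2 : ℝ) ≤ (n : ℝ) := by exact_mod_cast h2
  have hbb : ⟪β, β⟫ = ⟪α, α⟫ := hSL β hb α ha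
  have hc : ⟪β, α⟫ = ⟪α, β⟫ := real_inner_comm α β
  have hq : ⟪β - α, β - α⟫ = (2 - (n : ℝ)) * ⟪α, α⟫ := by
    rw [real_inner_sub_sub_self]; nlinarith
  have hq0 : ⟪β - α, β - α⟫ = 0 := le_antisymm (by nlinarith) real_inner_self_nonneg
  exact hne (sub_eq_zero.mp (inner_self_eq_zero.mp hq0))

private lemma two_inner_ge (hSL : R.SimplyLaced) {α β : V} (ha : α ∈ R.Φ) (hb : β ∈ R.Φ)
    (hne : β ≠ -α) : -⟪α, α⟫ ≤ 2 * ⟪α, β⟫ := by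
  obtain ⟨n, hn⟩ := R.crystallographic α ha β hb
  have hN : 0 < ⟪α, α⟫ := root_inner_self_pos ha
  rw [div_eq_iff hN.ne'] at hn
  by_contra h
  push_neg at h
  have h1 : (n : ℝ) < -1 := by nlinarith
  have h2 : n ≤ (-2 : ℤ) := by
    have : n < -1 := by exact_mod_cast h1
    omega
  have h2' : (n : ℝ) ≤ -2 := by exact_mod_cast h2
  have hbb : ⟪β, β⟫ = ⟪α, α⟫ := hSL β hb α ha
  have hc : ⟪β, α⟫ = ⟪α, β⟫ := real_inner_comm α β
  have hq : ⟪β + α, β + α⟫ = (2 + (n : ℝ)) * ⟪α, α⟫ := by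
    rw [real_inner_add_add_self]; nlinarith
  have hq0 : ⟪β + α, β + α⟫ = 0 := le_antisymm (by nlinarith) real_inner_self_nonneg
  have := inner_self_eq_zero.mp hq0
  exact hne (by rw [add_eq_zero_iff_eq_neg] at this; exact this)

private lemma sub_mem_of_inner_pos (hSL : R.SimplyLaced) {α β : V} (ha : α ∈ R.Φ) (hb : β ∈ R.Φ)
    (hip : 0 < ⟪α, β⟫) (hne : β ≠ α) : β - α ∈ R.Φ := by
  obtain ⟨n, hn⟩ := R.crystallographic α ha β hb
  have hN : 0 < ⟪α, α⟫ := root_inner_self_pos ha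
  have h2 : 2 * ⟪α, β⟫ = (n : ℝ) * ⟪α, α⟫ := (div_eq_iff hN.ne').mp hn
  have hle2 := two_inner_le hSL ha hb hne
  have hn1 : n = 1 := by
    have hp : (0 : ℝ) < (n : ℝ) := by nlinarith
    have hq : (n : ℝ) ≤ 1 := by nlinarith
    have hp' : (0 : ℤ) < n := by exact_mod_cast hp
    have hq' : n ≤ (1 : ℤ) := by exact_mod_cast hq
    omega
  have hr := R.reflect_mem α ha β hb
  rw [hn, hn1] at hr
  simpa using hr

private lemma add_mem_of_inner_neg (hSL : R.SimplyLaced) {α β : V} (ha : α ∈ R.Φ) (hb : β ∈ R.Φ)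
    (hip : ⟪α, β⟫ < 0) (hne : β ≠ -α) : β + α ∈ R.Φ := by
  obtain ⟨n, hn⟩ := R.crystallographic α ha β hb
  have hN : 0 < ⟪α, α⟫ := root_inner_self_pos ha
  have h2 : 2 * ⟪α, β⟫ = (n : ℝ) * ⟪α, α⟫ := (div_eq_iff hN.ne').mp hn
  have hge2 := two_inner_ge hSL ha hb hne
  have hn1 : n = -1 := by
    have hp : (n : ℝ) < 0 := by nlinarith
    have hq : (-1 : ℝ) ≤ (n : ℝ) := by nlinarith
    have hp' : n < (0 : ℤ) := by exact_mod_cast hp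
    have hq' : (-1 : ℤ) ≤ n := by exact_mod_cast hq
    omega
  have hr := R.reflect_mem α ha β hb
  rw [hn, hn1] at hr
  simpa [sub_neg_eq_add] using hr

end Helpers

section Main

variable {V : Type*} [NormedAddCommGroup V] [InnerProductSpace ℝ V]
  {R : RootSystemData V} {ι : Type*} [Fintype ι]

private lemma repr_add_same (B : RootBase R ι) (x : V) (i : ι) :
    B.b.repr (x + B.b i) i = B.b.repr x i + 1 := by
  simp [Finsupp.single_eq_same]

private lemma repr_add_ne (B : RootBase R ι) (x : V) {i k : ι} (h : i ≠ k) :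
    B.b.repr (x + B.b i) k = B.b.repr x k := by
  simp [Finsupp.single_eq_of_ne' h]

private lemma repr_sub_same (B : RootBase R ι) (x : V) (i : ι) :
    B.b.repr (x - B.b i) i = B.b.repr x i - 1 := by
  simp [Finsupp.single_eq_same]

private lemma repr_sub_ne (B : RootBase R ι) (x : V) {i k : ι} (h : i ≠ k) :
    B.b.repr (x - B.b i) k = B.b.repr x k := by
  simp [Finsupp.single_eq_of_ne' h]

private lemma repr_sub_apply (B : RootBase R ι) (x y : V) (k : ι) :
    B.b.repr (x - y) k = B.b.repr x k - B.b.repr y k := by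
  simp

private lemma sum_repr_single (B : RootBase R ι) (i : ι) :
    ∑ j, B.b.repr (B.b i) j = 1 := by
  classical
  simp [Module.Basis.repr_self, Finsupp.single_apply, Finset.sum_ite_eq]

private lemma sum_repr_sub (B : RootBase R ι) (x y : V) :
    ∑ j, B.b.repr (x - y) j = ∑ j, B.b.repr x j - ∑ j, B.b.repr y j := by
  simp [repr_sub_apply, Finset.sum_sub_distrib]

private lemma sum_repr_add (B : RootBase R ι) (x y : V) :
    ∑ j, B.b.repr (x + y) j = ∑ j, B.b.repr x j + ∑ j, B.b.repr y j := by
  simp [Finset.sum_add_distrib]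

private lemma coord_ge_one (B : RootBase R ι) {β₁ β₂ : V} (h₁ : β₁ ∈ R.Φ) (h₂ : β₂ ∈ R.Φ)
    {j : ι} (h : B.b.repr β₁ j < B.b.repr β₂ j) : B.b.repr β₁ j + 1 ≤ B.b.repr β₂ j := by
  obtain ⟨m1, hm1⟩ := B.coord_int β₁ h₁ j
  obtain ⟨m2, hm2⟩ := B.coord_int β₂ h₂ j
  rw [hm1, hm2] at h ⊢
  have h' : m1 < m2 := by exact_mod_cast h
  have h'' : m1 + 1 ≤ m2 := h'
  exact_mod_cast h''

/-- The common endgame of the induction. -/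
private lemma endgame (R : RootSystemData V) (B : RootBase R ι) (hSL : R.SimplyLaced) (n : ℕ)
    (IH : ∀ β₁ β₂ : V, B.IsPos β₁ → B.IsPos β₂ → β₁ ≠ β₂ → B.rle β₁ β₂ →
      IsChain B.rle {γ | B.IsPos γ ∧ B.rle β₁ γ ∧ B.rle γ β₂} →
      (∑ i, B.b.repr (β₂ - β₁) i) ≤ (n : ℝ) → B.IsPos (β₂ - β₁))
    (β₁ β₂ : V) (hβ₁ : B.IsPos β₁) (hβ₂ : B.IsPos β₂) (hle : B.rle β₁ β₂)
    (hchain : IsChain B.rle {γ | B.IsPos γ ∧ B.rle β₁ γ ∧ B.rle γ β₂})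
    (hht : (∑ i, B.b.repr (β₂ - β₁) i) ≤ (n : ℝ) + 1)
    (i : ι) (hc1 : B.b.repr β₁ i + 1 ≤ B.b.repr β₂ i)
    (hε : B.IsPos (β₂ - β₁ - B.b i)) (hεne : β₂ - β₁ - B.b i ≠ 0) :
    (β₂ - β₁) ∈ R.Φ := by
  have hαmem := B.simple_mem i
  have hN : 0 < ⟪B.b i, B.b i⟫ := root_inner_self_pos hαmem
  by_cases hlt : ⟪B.b i, β₂ - β₁ - B.b i⟫ < 0
  · have hne' : β₂ - β₁ - B.b i ≠ -B.b i := by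
      intro h
      have h0 := hε.2 i
      rw [h] at h0
      simp only [map_neg, Finsupp.neg_apply, Module.Basis.repr_self, Finsupp.single_eq_same] at h0
      linarith
    have hmem := add_mem_of_inner_neg hSL hαmem hε.1 hlt hne'
    have heq : β₂ - β₁ - B.b i + B.b i = β₂ - β₁ := by abel
    rwa [heq] at hmem
  · push_neg at hlt
    have hβ₁ne : β₁ ≠ -B.b i := by
      intro h
      have h0 := hβ₁.2 i
      rw [h] at h0
      simp only [map_neg, Finsupp.neg_apply, Module.Basis.repr_self, Finsupp.single_eq_same] at h0
      linarith
    have hβ₂ne : β₂ ≠ B.b i := by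
      intro h
      apply R.nonzero β₁ hβ₁.1
      have hz : ∀ k, B.b.repr β₁ k = 0 := by
        intro k
        have h1 := hβ₁.2 k
        rcases eq_or_ne i k with rfl | hik
        · rw [h] at hc1
          simp only [Module.Basis.repr_self, Finsupp.single_eq_same] at hc1
          linarith
        · have h2 := hle k
          rw [h] at h2
          simp only [Module.Basis.repr_self, Finsupp.single_eq_of_ne' hik] at h2
          linarith
      apply B.b.repr.injective
      ext k
      simp [hz k]
    have hge := two_inner_ge hSL hαmem hβ₁.1 hβ₁ne
    have hle2 := two_inner_le hSL hαmem hβ₂.1 hβ₂ne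
    have hsplit : ⟪B.b i, β₂⟫ = ⟪B.b i, β₁⟫ + ⟪B.b i, β₂ - β₁ - B.b i⟫ + ⟪B.b i, B.b i⟫ := by
      have h7 : β₂ = β₁ + (β₂ - β₁ - B.b i) + B.b i := by abel
      conv_lhs => rw [h7]
      rw [inner_add_right, inner_add_right]
    have hε0 : ⟪B.b i, β₂ - β₁ - B.b i⟫ = 0 := by linarith
    have hγmem : β₁ + B.b i ∈ R.Φ :=
      add_mem_of_inner_neg hSL hαmem hβ₁.1 (by linarith) hβ₁ne
    have hδmem : β₂ - B.b i ∈ R.Φ :=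
      sub_mem_of_inner_pos hSL hαmem hβ₂.1 (by linarith) hβ₂ne
    have hγpos : B.IsPos (β₁ + B.b i) := by
      refine ⟨hγmem, fun k => ?_⟩
      rcases eq_or_ne i k with rfl | hik
      · rw [repr_add_same]; linarith [hβ₁.2 i]
      · rw [repr_add_ne B β₁ hik]; exact hβ₁.2 k
    have hδpos : B.IsPos (β₂ - B.b i) := by
      refine ⟨hδmem, fun k => ?_⟩
      rcases eq_or_ne i k with rfl | hik
      · rw [repr_sub_same]; linarith [hβ₁.2 i]
      · rw [repr_sub_ne B β₂ hik]; exact hβ₂.2 k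
    have hγS : (β₁ + B.b i) ∈ {γ | B.IsPos γ ∧ B.rle β₁ γ ∧ B.rle γ β₂} := by
      refine ⟨hγpos, fun k => ?_, fun k => ?_⟩
      · rcases eq_or_ne i k with rfl | hik
        · rw [repr_add_same]; linarith
        · rw [repr_add_ne B β₁ hik]
      · rcases eq_or_ne i k with rfl | hik
        · rw [repr_add_same]; linarith
        · rw [repr_add_ne B β₁ hik]; exact hle k
    have hδS : (β₂ - B.b i) ∈ {γ | B.IsPos γ ∧ B.rle β₁ γ ∧ B.rle γ β₂} := by
      refine ⟨hδpos, fun k => ?_, fun k => ?_⟩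
      · rcases eq_or_ne i k with rfl | hik
        · rw [repr_sub_same]; linarith
        · rw [repr_sub_ne B β₂ hik]; exact hle k
      · rcases eq_or_ne i k with rfl | hik
        · rw [repr_sub_same]; linarith
        · rw [repr_sub_ne B β₂ hik]
    by_cases hδγ : B.rle (β₂ - B.b i) (β₁ + B.b i)
    · -- then ε is a multiple of the simple root: contradiction
      exfalso
      have hεt : β₂ - β₁ - B.b i = (B.b.repr (β₂ - β₁ - B.b i) i) • B.b i := by
        apply B.b.repr.injective
        ext k
        simp only [map_smul, Finsupp.smul_apply, Module.Basis.repr_self, smul_eq_mul]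
        rcases eq_or_ne i k with rfl | hik
        · rw [Finsupp.single_eq_same, mul_one]
        · rw [Finsupp.single_eq_of_ne' hik, mul_zero]
          have h1 := hε.2 k
          have h2 := hδγ k
          rw [repr_sub_ne B β₂ hik, repr_add_ne B β₁ hik] at h2
          rw [repr_sub_ne B _ hik, repr_sub_apply] at h1 ⊢
          linarith
      rw [hεt, real_inner_smul_right] at hε0
      have ht0 : B.b.repr (β₂ - β₁ - B.b i) i = 0 :=
        (mul_eq_zero.mp hε0).resolve_right hN.ne'
      exact hεne (by rw [hεt, ht0, zero_smul])
    · have hγδne : (β₁ + B.b i) ≠ (β₂ - B.b i) := by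
        intro h
        exact hδγ (h ▸ fun k => le_refl _)
      have hcomp := hchain hγS hδS hγδne
      have hγδ : B.rle (β₁ + B.b i) (β₂ - B.b i) := by
        rcases hcomp with h' | h'
        · exact h'
        · exact absurd h' hδγ
      have hchain' : IsChain B.rle
          {x | B.IsPos x ∧ B.rle (β₁ + B.b i) x ∧ B.rle x (β₂ - B.b i)} := by
        refine IsChain.mono ?_ hchain
        rintro x ⟨hx1, hx2, hx3⟩
        exact ⟨hx1, fun k => le_trans (hγS.2.1 k) (hx2 k), fun k => le_trans (hx3 k) (hδS.2.2 k)⟩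
      have hht' : (∑ j, B.b.repr ((β₂ - B.b i) - (β₁ + B.b i)) j) ≤ (n : ℝ) := by
        rw [sum_repr_sub, sum_repr_sub, sum_repr_add, sum_repr_single]
        rw [sum_repr_sub] at hht
        linarith
      have hζ := IH (β₁ + B.b i) (β₂ - B.b i) hγpos hδpos hγδne hγδ hchain' hht'
      have hζmem := hζ.1
      have hεeq : β₂ - β₁ - B.b i = ((β₂ - B.b i) - (β₁ + B.b i)) + B.b i := by abel
      have h1 : ⟪β₂ - β₁ - B.b i, β₂ - β₁ - B.b i⟫ = ⟪B.b i, B.b i⟫ := hSL _ hε.1 _ hαmem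
      have h2 : ⟪(β₂ - B.b i) - (β₁ + B.b i), (β₂ - B.b i) - (β₁ + B.b i)⟫ = ⟪B.b i, B.b i⟫ :=
        hSL _ hζmem _ hαmem
      rw [hεeq, real_inner_add_add_self] at h1
      have h4 : ⟪B.b i, β₂ - β₁ - B.b i⟫
          = ⟪B.b i, (β₂ - B.b i) - (β₁ + B.b i)⟫ + ⟪B.b i, B.b i⟫ := by
        rw [hεeq, inner_add_right]
      have hcm : ⟪(β₂ - B.b i) - (β₁ + B.b i), B.b i⟫
          = ⟪B.b i, (β₂ - B.b i) - (β₁ + B.b i)⟫ := real_inner_comm _ _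
      exfalso
      linarith

end Main

section Key

variable {V : Type*} [NormedAddCommGroup V] [InnerProductSpace ℝ V]
  {R : RootSystemData V} {ι : Type*} [Fintype ι]

private lemma key (R : RootSystemData V) (B : RootBase R ι) (hSL : R.SimplyLaced) :
    ∀ n : ℕ, ∀ β₁ β₂ : V, B.IsPos β₁ → B.IsPos β₂ → β₁ ≠ β₂ → B.rle β₁ β₂ →
      IsChain B.rle {γ | B.IsPos γ ∧ B.rle β₁ γ ∧ B.rle γ β₂} →
      (∑ i, B.b.repr (β₂ - β₁) i) ≤ (n : ℝ) → B.IsPos (β₂ - β₁) := by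
  intro n
  induction n with
  | zero =>
    intro β₁ β₂ hβ₁ hβ₂ hne hle hchain hht
    exfalso
    have hnn : ∀ i, 0 ≤ B.b.repr (β₂ - β₁) i := fun i => by
      rw [repr_sub_apply]; linarith [hle i]
    have hsum0 : ∑ i, B.b.repr (β₂ - β₁) i = 0 :=
      le_antisymm (by simpa using hht) (Finset.sum_nonneg fun i _ => hnn i)
    have hall := (Finset.sum_eq_zero_iff_of_nonneg (fun i _ => hnn i)).mp hsum0
    apply hne
    have : β₂ - β₁ = 0 := by
      apply B.b.repr.injective
      ext k
      simpa using hall k (Finset.mem_univ k)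
    have := sub_eq_zero.mp this
    exact this.symm
  | succ n IH =>
    intro β₁ β₂ hβ₁ hβ₂ hne hle hchain hht
    have hd_nonneg : ∀ i, 0 ≤ B.b.repr (β₂ - β₁) i := fun i => by
      rw [repr_sub_apply]; linarith [hle i]
    have hd_ne : β₂ - β₁ ≠ 0 := sub_ne_zero_of_ne (Ne.symm hne)
    have hdd : 0 < ⟪β₂ - β₁, β₂ - β₁⟫ :=
      lt_of_le_of_ne real_inner_self_nonneg
        (fun h' => hd_ne (inner_self_eq_zero.mp h'.symm))
    have hexp : ∀ y : V, ⟪β₂ - β₁, y⟫ = ∑ j, B.b.repr (β₂ - β₁) j * ⟪B.b j, y⟫ := by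
      intro y
      conv_lhs => rw [← B.b.sum_repr (β₂ - β₁)]
      rw [sum_inner]
      simp [real_inner_smul_left]
    have hht' : (∑ i, B.b.repr (β₂ - β₁) i) ≤ (n : ℝ) + 1 := by
      push_cast at hht; linarith
    have hcases : ⟪β₂ - β₁, β₁⟫ < 0 ∨ 0 < ⟪β₂ - β₁, β₂⟫ := by
      by_contra h
      push_neg at h
      obtain ⟨h1, h2⟩ := h
      rw [inner_sub_right] at hdd
      linarith
    rcases hcases with hA | hB
    · -- Case A: some simple root with positive coefficient pairs negatively with β₁
      have hex : ∃ j, 0 < B.b.repr (β₂ - β₁) j ∧ ⟪B.b j, β₁⟫ < 0 := by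
        by_contra h
        push_neg at h
        have hge0 : 0 ≤ ∑ j, B.b.repr (β₂ - β₁) j * ⟪B.b j, β₁⟫ := by
          refine Finset.sum_nonneg fun j _ => ?_
          rcases (hd_nonneg j).eq_or_lt with h0 | h0
          · rw [← h0, zero_mul]
          · exact mul_nonneg (le_of_lt h0) (h j h0)
        rw [← hexp β₁] at hge0
        linarith
      obtain ⟨j, hcj, hinnj⟩ := hex
      have hcj' : B.b.repr β₁ j < B.b.repr β₂ j := by
        rw [repr_sub_apply] at hcj; linarith
      have hcj1 : B.b.repr β₁ j + 1 ≤ B.b.repr β₂ j := coord_ge_one B hβ₁.1 hβ₂.1 hcj'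
      have hβ₁ne : β₁ ≠ -B.b j := by
        intro h
        have h0 := hβ₁.2 j
        rw [h] at h0
        simp only [map_neg, Finsupp.neg_apply, Module.Basis.repr_self, Finsupp.single_eq_same] at h0
        linarith
      have hγmem : β₁ + B.b j ∈ R.Φ :=
        add_mem_of_inner_neg hSL (B.simple_mem j) hβ₁.1 hinnj hβ₁ne
      by_cases hγβ₂ : β₁ + B.b j = β₂
      · have hdj : β₂ - β₁ = B.b j := by rw [← hγβ₂]; abel
        exact ⟨hdj ▸ B.simple_mem j, hd_nonneg⟩
      · have hγpos : B.IsPos (β₁ + B.b j) := by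
          refine ⟨hγmem, fun k => ?_⟩
          rcases eq_or_ne j k with rfl | hjk
          · rw [repr_add_same]; linarith [hβ₁.2 j]
          · rw [repr_add_ne B β₁ hjk]; exact hβ₁.2 k
        have hγle : B.rle (β₁ + B.b j) β₂ := by
          intro k
          rcases eq_or_ne j k with rfl | hjk
          · rw [repr_add_same]; linarith
          · rw [repr_add_ne B β₁ hjk]; exact hle k
        have hβ₁γ : B.rle β₁ (β₁ + B.b j) := by
          intro k
          rcases eq_or_ne j k with rfl | hjk
          · rw [repr_add_same]; linarith
          · rw [repr_add_ne B β₁ hjk]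
        have hchain' : IsChain B.rle
            {x | B.IsPos x ∧ B.rle (β₁ + B.b j) x ∧ B.rle x β₂} := by
          refine IsChain.mono ?_ hchain
          rintro x ⟨hx1, hx2, hx3⟩
          exact ⟨hx1, fun k => le_trans (hβ₁γ k) (hx2 k), hx3⟩
        have hhtγ : (∑ k, B.b.repr (β₂ - (β₁ + B.b j)) k) ≤ (n : ℝ) := by
          rw [sum_repr_sub, sum_repr_add, sum_repr_single]
          rw [sum_repr_sub] at hht'
          linarith
        have hεpos := IH (β₁ + B.b j) β₂ hγpos hβ₂ hγβ₂ hγle hchain' hhtγ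
        have hrw : β₂ - (β₁ + B.b j) = β₂ - β₁ - B.b j := by abel
        rw [hrw] at hεpos
        have hεne : β₂ - β₁ - B.b j ≠ 0 := by
          intro h
          apply hγβ₂
          have h2 : β₂ - β₁ = B.b j := by rwa [sub_eq_zero] at h
          rw [← h2]; abel
        exact ⟨endgame R B hSL n IH β₁ β₂ hβ₁ hβ₂ hle hchain hht' j hcj1 hεpos hεne,
          hd_nonneg⟩
    · -- Case B: some simple root with positive coefficient pairs positively with β₂
      have hex : ∃ j, 0 < B.b.repr (β₂ - β₁) j ∧ 0 < ⟪B.b j, β₂⟫ := by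
        by_contra h
        push_neg at h
        have hle0 : ∑ j, B.b.repr (β₂ - β₁) j * ⟪B.b j, β₂⟫ ≤ 0 := by
          refine Finset.sum_nonpos fun j _ => ?_
          rcases (hd_nonneg j).eq_or_lt with h0 | h0
          · rw [← h0, zero_mul]
          · exact mul_nonpos_of_nonneg_of_nonpos (le_of_lt h0) (h j h0)
        rw [← hexp β₂] at hle0
        linarith
      obtain ⟨j, hcj, hinnj⟩ := hex
      have hcj' : B.b.repr β₁ j < B.b.repr β₂ j := by
        rw [repr_sub_apply] at hcj; linarith
      have hcj1 : B.b.repr β₁ j + 1 ≤ B.b.repr β₂ j := coord_ge_one B hβ₁.1 hβ₂.1 hcj'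
      have hβ₂ne : β₂ ≠ B.b j := by
        intro h
        apply R.nonzero β₁ hβ₁.1
        have hz : ∀ k, B.b.repr β₁ k = 0 := by
          intro k
          have h1 := hβ₁.2 k
          rcases eq_or_ne j k with rfl | hjk
          · rw [h] at hcj1
            simp only [Module.Basis.repr_self, Finsupp.single_eq_same] at hcj1
            linarith
          · have h2 := hle k
            rw [h] at h2
            simp only [Module.Basis.repr_self, Finsupp.single_eq_of_ne' hjk] at h2
            linarith
        apply B.b.repr.injective
        ext k
        simp [hz k]
      have hδmem : β₂ - B.b j ∈ R.Φ :=
        sub_mem_of_inner_pos hSL (B.simple_mem j) hβ₂.1 hinnj hβ₂ne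
      by_cases hβ₁δ : β₁ = β₂ - B.b j
      · have hdj : β₂ - β₁ = B.b j := by rw [hβ₁δ]; abel
        exact ⟨hdj ▸ B.simple_mem j, hd_nonneg⟩
      · have hδpos : B.IsPos (β₂ - B.b j) := by
          refine ⟨hδmem, fun k => ?_⟩
          rcases eq_or_ne j k with rfl | hjk
          · rw [repr_sub_same]; linarith [hβ₁.2 j]
          · rw [repr_sub_ne B β₂ hjk]; exact hβ₂.2 k
        have hβ₁δle : B.rle β₁ (β₂ - B.b j) := by
          intro k
          rcases eq_or_ne j k with rfl | hjk
          · rw [repr_sub_same]; linarith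
          · rw [repr_sub_ne B β₂ hjk]; exact hle k
        have hδβ₂ : B.rle (β₂ - B.b j) β₂ := by
          intro k
          rcases eq_or_ne j k with rfl | hjk
          · rw [repr_sub_same]; linarith
          · rw [repr_sub_ne B β₂ hjk]
        have hchain' : IsChain B.rle
            {x | B.IsPos x ∧ B.rle β₁ x ∧ B.rle x (β₂ - B.b j)} := by
          refine IsChain.mono ?_ hchain
          rintro x ⟨hx1, hx2, hx3⟩
          exact ⟨hx1, hx2, fun k => le_trans (hx3 k) (hδβ₂ k)⟩
        have hhtδ : (∑ k, B.b.repr ((β₂ - B.b j) - β₁) k) ≤ (n : ℝ) := by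
          rw [sum_repr_sub, sum_repr_sub, sum_repr_single]
          rw [sum_repr_sub] at hht'
          linarith
        have hεpos := IH β₁ (β₂ - B.b j) hβ₁ hδpos hβ₁δ hβ₁δle hchain' hhtδ
        have hrw : (β₂ - B.b j) - β₁ = β₂ - β₁ - B.b j := by abel
        rw [hrw] at hεpos
        have hεne : β₂ - β₁ - B.b j ≠ 0 := by
          intro h
          apply hβ₁δ
          have h2 : β₂ - β₁ = B.b j := by rwa [sub_eq_zero] at h
          rw [← h2]; abel
        exact ⟨endgame R B hSL n IH β₁ β₂ hβ₁ hβ₂ hle hchain hht' j hcj1 hεpos hεne,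
          hd_nonneg⟩

end Key

/-- In a simply laced root system, if the interval [β₁, β₂] in the root poset is a
(nonempty) chain for distinct positive roots β₁ < β₂, then β₂ - β₁ is a positive root. -/
theorem chain_interval_difference_simply_laced {V : Type*}
    [NormedAddCommGroup V] [InnerProductSpace ℝ V]
    {ι : Type*} [Fintype ι] (R : RootSystemData V) (B : RootBase R ι)
    (hSL : R.SimplyLaced)
    (β₁ β₂ : V) (hβ₁ : B.IsPos β₁) (hβ₂ : B.IsPos β₂) (hne : β₁ ≠ β₂) (hle : B.rle β₁ β₂)
    (hchain : IsChain B.rle {γ | B.IsPos γ ∧ B.rle β₁ γ ∧ B.rle γ β₂}) :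
    B.IsPos (β₂ - β₁) := by
  exact key R B hSL ⌈∑ i, B.b.repr (β₂ - β₁) i⌉₊ β₁ β₂ hβ₁ hβ₂ hne hle hchain
    (Nat.le_ceil _)
end

section
/- Let Φ be a finite crystallographic root system with simple roots Δ, α, β ∈ Δ, a, b positive integers with aα + bβ ∈ Φ⁺, and Φ' = Φ ∩ span({aα + bβ} ∪ Δ\{α,β}) with positive system Φ'⁺ = Φ' ∩ Φ⁺ and simple roots Δ' = {aα + bβ} ∪ Δ\{α,β}. Then the root poset on Φ'⁺ (defined coordinatewise over Δ') coincides with the partial order induced on Φ'⁺ from the root poset on Φ⁺. -/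
open scoped RealInnerProductSpace

/-- With Δ' = {aα + bβ} ∪ Δ \ {α, β} and Φ'⁺ = Φ⁺ ∩ span Δ', the root poset on Φ'⁺,
defined coordinatewise over Δ', coincides with the order induced from the root poset on
Φ⁺: for γ, γ' ∈ Φ'⁺, the difference γ' - γ is a nonnegative combination of Δ' iff
γ ≤ γ' coordinatewise over Δ. -/
theorem subsystem_root_poset {V : Type*} [NormedAddCommGroup V] [InnerProductSpace ℝ V]
    {ι : Type*} [Fintype ι] [DecidableEq ι] (R : RootSystemData V) (B : RootBase R ι)
    (i j : ι) (hij : i ≠ j) (a b : ℕ) (ha : 0 < a) (hb : 0 < b)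
    (hroot : B.IsPos ((a : ℝ) • B.b i + (b : ℝ) • B.b j)) :
    ∀ γ γ' : V, B.IsPos γ →
      γ ∈ (Submodule.span ℝ ({(a : ℝ) • B.b i + (b : ℝ) • B.b j} ∪
            (Set.range B.b \ {B.b i, B.b j})) : Set V) →
      B.IsPos γ' →
      γ' ∈ (Submodule.span ℝ ({(a : ℝ) • B.b i + (b : ℝ) • B.b j} ∪
            (Set.range B.b \ {B.b i, B.b j})) : Set V) →
      ((∃ (t : ℝ) (m : ι → ℝ), 0 ≤ t ∧ (∀ k, 0 ≤ m k) ∧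
          γ' - γ = t • ((a : ℝ) • B.b i + (b : ℝ) • B.b j) +
            ∑ k ∈ Finset.univ \ {i, j}, m k • B.b k) ↔ B.rle γ γ') := by
  intro γ γ' hγ hγs hγ' hγ's
  have ha' : (0:ℝ) < a := by exact_mod_cast ha
  set v : V := (a : ℝ) • B.b i + (b : ℝ) • B.b j with hv
  set S : Set V := {v} ∪ (Set.range B.b \ {B.b i, B.b j}) with hS
  -- key: on span S, b * coord i = a * coord j
  set L : V →ₗ[ℝ] ℝ := (b:ℝ) • B.b.coord i - (a:ℝ) • B.b.coord j with hL
  have hker : Submodule.span ℝ S ≤ LinearMap.ker L := by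
    rw [Submodule.span_le]
    rintro x (rfl | ⟨⟨k, rfl⟩, hx2⟩)
    · simp only [hL, LinearMap.mem_ker, LinearMap.sub_apply, LinearMap.smul_apply,
        smul_eq_mul, hv, map_add, map_smul, Module.Basis.coord_apply, Module.Basis.repr_self,
        Finsupp.single_apply]
      simp [hij, Ne.symm hij]
      ring
    · have hki : k ≠ i := fun h => hx2 (by simp [h])
      have hkj : k ≠ j := fun h => hx2 (by simp [h])
      simp [hL, Module.Basis.coord_apply, Finsupp.single_apply, hki, hkj]
  have hd : γ' - γ ∈ Submodule.span ℝ S := Submodule.sub_mem _ hγ's hγs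
  have hdkey : (b:ℝ) * B.b.repr (γ' - γ) i = (a:ℝ) * B.b.repr (γ' - γ) j := by
    have := hker hd
    simp only [hL, LinearMap.mem_ker, LinearMap.sub_apply, LinearMap.smul_apply,
      smul_eq_mul, Module.Basis.coord_apply] at this
    linarith
  constructor
  · rintro ⟨t, m, ht, hm, heq⟩ k
    have h1 : B.b.repr (γ' - γ) k = t * (B.b.repr v k) +
        ∑ l ∈ Finset.univ \ {i, j}, m l * B.b.repr (B.b l) k := by
      rw [heq, map_add, map_smul, map_sum]
      simp only [Finsupp.coe_add, Pi.add_apply, Finsupp.coe_smul, Pi.smul_apply,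
        smul_eq_mul, Finsupp.coe_finset_sum, Finset.sum_apply, map_smul]
    have h2 : 0 ≤ B.b.repr (γ' - γ) k := by
      rw [h1]
      have := hroot.2 k
      refine add_nonneg (mul_nonneg ht this) (Finset.sum_nonneg fun l _ => ?_)
      refine mul_nonneg (hm l) ?_
      simp [Module.Basis.repr_self, Finsupp.single_apply]
      split <;> norm_num
    have : B.b.repr (γ' - γ) k = B.b.repr γ' k - B.b.repr γ k := by simp
    rw [this] at h2
    linarith
  · intro hle
    have hnn : ∀ k, 0 ≤ B.b.repr (γ' - γ) k := by
      intro k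
      have := hle k
      simp only [map_sub, Finsupp.coe_sub, Pi.sub_apply]
      linarith
    refine ⟨B.b.repr (γ' - γ) i / a, fun k => B.b.repr (γ' - γ) k,
      div_nonneg (hnn i) ha'.le, hnn, ?_⟩
    set t : ℝ := B.b.repr (γ' - γ) i / a with hT
    have hta : t * a = B.b.repr (γ' - γ) i := by
      rw [hT]; field_simp
    have htb : t * b = B.b.repr (γ' - γ) j := by
      rw [hT, div_mul_eq_mul_div, mul_comm (B.b.repr (γ' - γ) i) (b:ℝ), hdkey,
        mul_comm (a:ℝ), mul_div_assoc, div_self ha'.ne', mul_one]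
    have hsum : γ' - γ = ∑ k, B.b.repr (γ' - γ) k • B.b k := (B.b.sum_repr _).symm
    have hpair : (∑ k ∈ ({i, j} : Finset ι), B.b.repr (γ' - γ) k • B.b k)
        = B.b.repr (γ' - γ) i • B.b i + B.b.repr (γ' - γ) j • B.b j :=
      Finset.sum_pair hij
    have hv' : t • v = B.b.repr (γ' - γ) i • B.b i + B.b.repr (γ' - γ) j • B.b j := by
      rw [hv, smul_add, smul_smul, smul_smul, hta, htb]
    rw [hv', ← hpair]
    rw [add_comm, Finset.sum_sdiff (Finset.subset_univ _)]
    exact hsum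
end

section
/- Let I be an order ideal in the root poset of a finite crystallographic root system Φ, and α a simple root. If the order filter F_I(α) = {γ ∈ I : γ ≥ α} is an order filter of I containing two incomparable elements, then F_I(α) contains an entire 2-flat of I (a set of the form I ∩ span{γ, γ'} of rank 2). Equivalently, if some order filter of I generated by a minimal element contains no entire 2-flat, then it is a chain. -/
open scoped RealInnerProductSpace

namespace FlatAux


lemma bnd {S E T : ℤ} (h : S*E = -T) (hE : E ≤ -1) (hT : 1 ≤ T) : -E ≤ T := by
  have hS : 1 ≤ S := by
    by_contra hc
    push_neg at hc
    have h0 : S ≤ 0 := by omega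
    nlinarith
  nlinarith [mul_nonneg (by linarith : (0:ℤ) ≤ S - 1) (by linarith : (0:ℤ) ≤ -E)]

lemma sq_eq {a : ℤ} (h : a^2 ≤ 0) : a = 0 := by nlinarith [sq_nonneg a]

set_option maxHeartbeats 1000000 in
lemma arith (m n p q p' q' K1 K2 K1' K2' E E' : ℤ)
    (hm : m ≤ -1) (hn : n ≤ -1) (hmn : m*n ≤ 3)
    (hq : 1 ≤ q) (hp'1 : 1 ≤ p') (hpp : p' + 1 ≤ p) (hqq : q + 1 ≤ q')
    (hpm : p + m*q ≤ 0) (hpm' : p' + m*q' ≤ 0)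
    (hE : E = n*p^2 + m*q^2 + m*n*p*q) (hE' : E' = n*p'^2 + m*q'^2 + m*n*p'*q')
    (hEneg : E ≤ -1) (hE'neg : E' ≤ -1)
    (h1 : K1*E = n*(2*p + m*q)) (h2 : K2*E = m*(n*p + 2*q))
    (h1' : K1'*E' = n*(2*p' + m*q')) (h2' : K2'*E' = m*(n*p' + 2*q')) : False := by
  have hp2 : 2 ≤ p := by omega
  have hq'2 : 2 ≤ q' := by omega
  have hm3 : -3 ≤ m := by nlinarith
  have hn3 : -3 ≤ n := by nlinarith
  interval_cases m <;> interval_cases n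
  -- cases in order: m=-3: n=-3,-2,-1 ; m=-2: n=-3,-2,-1 ; m=-1: n=-3,-2,-1
  · omega
  · omega
  · -- m=-3, n=-1
    have hT : (2*K1+K2)*E = -p := by linear_combination 2*h1 + h2
    have hb : -E ≤ p := bnd hT hEneg (by omega)
    have hT' : (2*K1'+K2')*E' = -p' := by linear_combination 2*h1' + h2'
    have hb' : -E' ≤ p' := bnd hT' hE'neg (by omega)
    rw [hE] at hb; rw [hE'] at hb'
    have hDb : p^2 + 3*q^2 - 3*p*q ≤ p := by linarith
    have hDb' : p'^2 + 3*q'^2 - 3*p'*q' ≤ p' := by linarith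
    have hq'le : q' ≤ 2 := by
      by_contra hc
      push_neg at hc
      nlinarith [sq_nonneg (2*p' - 3*q' - 1),
        mul_nonneg (by linarith : (0:ℤ) ≤ q' - 3) (by linarith : (0:ℤ) ≤ q')]
    have hq'eq : q' = 2 := by omega
    have hq1 : q = 1 := by omega
    have hple : p ≤ 3 := by omega
    have hp'le : p' ≤ 2 := by omega
    subst hq'eq
    interval_cases p' <;> omega
  · omega
  · omega
  · -- m=-2, n=-1
    have hT' : (K1'+K2')*E' = -(2*q') := by linear_combination h1' + h2'
    have hb' : -E' ≤ 2*q' := bnd hT' hE'neg (by omega)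
    rw [hE'] at hb'
    have hDb' : p'^2 + 2*q'^2 - 2*p'*q' ≤ 2*q' := by linarith
    have hq'le : q' ≤ 2 := by
      by_contra hc
      push_neg at hc
      nlinarith [sq_nonneg (p' - q'),
        mul_nonneg (by linarith : (0:ℤ) ≤ q' - 3) (by linarith : (0:ℤ) ≤ q')]
    have hq'eq : q' = 2 := by omega
    subst hq'eq
    have hp'sq : (p' - 2)^2 ≤ 0 := by nlinarith
    have hp'eq : p' = 2 := by have := sq_eq hp'sq; omega
    omega
  · -- m=-1, n=-3
    have hT : (K1+2*K2)*E = -q := by linear_combination h1 + 2*h2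
    have hb : -E ≤ q := bnd hT hEneg (by omega)
    have hT' : (K1'+2*K2')*E' = -q' := by linear_combination h1' + 2*h2'
    have hb' : -E' ≤ q' := bnd hT' hE'neg (by omega)
    rw [hE] at hb; rw [hE'] at hb'
    have hDb : 3*p^2 + q^2 - 3*p*q ≤ q := by linarith
    have hDb' : 3*p'^2 + q'^2 - 3*p'*q' ≤ q' := by linarith
    have hple : p ≤ 2 := by
      by_contra hc
      push_neg at hc
      nlinarith [sq_nonneg (2*q - 3*p - 1),
        mul_nonneg (by linarith : (0:ℤ) ≤ p - 3) (by linarith : (0:ℤ) ≤ p)]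
    have hpeq : p = 2 := by omega
    subst hpeq
    have hq3 : 3 ≤ q := by
      by_contra hc
      push_neg at hc
      nlinarith [mul_pos (by linarith : (0:ℤ) < 3 - q) (by linarith : (0:ℤ) < 4 - q)]
    have hp'eq : p' = 1 := by omega
    subst hp'eq
    nlinarith [mul_pos (by linarith : (0:ℤ) < q' - 1) (by linarith : (0:ℤ) < q' - 3)]
  · -- m=-1, n=-2
    have hT : (K1+K2)*E = -(2*p) := by linear_combination h1 + h2
    have hb : -E ≤ 2*p := bnd hT hEneg (by omega)
    have hT' : (K1'+K2')*E' = -(2*p') := by linear_combination h1' + h2'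
    have hb' : -E' ≤ 2*p' := bnd hT' hE'neg (by omega)
    rw [hE] at hb; rw [hE'] at hb'
    have hDb : 2*p^2 + q^2 - 2*p*q ≤ 2*p := by linarith
    have hDb' : 2*p'^2 + q'^2 - 2*p'*q' ≤ 2*p' := by linarith
    have hple : p ≤ 2 := by
      by_contra hc
      push_neg at hc
      nlinarith [sq_nonneg (p - q),
        mul_nonneg (by linarith : (0:ℤ) ≤ p - 3) (by linarith : (0:ℤ) ≤ p)]
    have hpeq : p = 2 := by omega
    subst hpeq
    have hqsq : (q - 2)^2 ≤ 0 := by nlinarith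
    have hqeq : q = 2 := by have := sq_eq hqsq; omega
    have hp'eq : p' = 1 := by omega
    subst hp'eq
    nlinarith [mul_pos (by linarith : (0:ℤ) < q') (by linarith : (0:ℤ) < q' - 2)]
  · -- m=-1, n=-1
    have hT : (K1+K2)*E = -(p+q) := by linear_combination h1 + h2
    have hb : -E ≤ p+q := bnd hT hEneg (by omega)
    rw [hE] at hb
    have hDb : p^2 + q^2 - p*q ≤ p + q := by linarith
    have hqle : q ≤ p := by
      by_contra hc
      push_neg at hc
      nlinarith [mul_nonneg (by linarith : (0:ℤ) ≤ p - 2) (by linarith : (0:ℤ) ≤ p),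
        mul_pos (by linarith : (0:ℤ) < q - p) (by linarith : (0:ℤ) < q - 1)]
    have hqp : q = p := by omega
    subst hqp
    have hpeq : q = 2 := by nlinarith
    subst hpeq
    norm_num at hE
    rw [hE] at h1
    omega

end FlatAux

namespace FlatAux


variable {V : Type*} [NormedAddCommGroup V] [InnerProductSpace ℝ V]
  {R : RootSystemData V} {ι : Type*} [Fintype ι]

lemma inner_self_pos' {x : V} (hx : x ≠ 0) : 0 < ⟪x, x⟫ := by
  rcases lt_or_eq_of_le (real_inner_self_nonneg (x := x)) with h | h
  · exact h
  · exact absurd (inner_self_eq_zero.mp h.symm) hx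

/-- height functional -/
noncomputable def hts (B : RootBase R ι) (x : V) : ℝ := ∑ j, B.b.repr x j

lemma hts_add (B : RootBase R ι) (x y : V) : hts B (x + y) = hts B x + hts B y := by
  simp [hts, Finset.sum_add_distrib]

lemma hts_one_le (B : RootBase R ι) {x : V} (hx : x ∈ B.Pos) : 1 ≤ hts B x := by
  obtain ⟨hxΦ, hxc⟩ := hx
  -- some coordinate is nonzero
  have hx0 : x ≠ 0 := R.nonzero x hxΦ
  have : ∃ j, B.b.repr x j ≠ 0 := by
    by_contra hc
    push_neg at hc
    apply hx0
    have : B.b.repr x = 0 := Finsupp.ext fun j => hc j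
    have := congrArg (B.b.repr.symm) this
    simpa using this
  obtain ⟨j, hj⟩ := this
  obtain ⟨n, hn⟩ := B.coord_int x hxΦ j
  have h1 : 1 ≤ B.b.repr x j := by
    have h0 : 0 ≤ B.b.repr x j := hxc j
    rw [hn] at h0 hj ⊢
    have : 1 ≤ n := by exact_mod_cast lt_of_le_of_ne h0 (Ne.symm hj)
    exact_mod_cast this
  calc (1:ℝ) ≤ B.b.repr x j := h1
    _ ≤ ∑ k, B.b.repr x k := Finset.single_le_sum (fun k _ => hxc k) (Finset.mem_univ j)

lemma hts_pos (B : RootBase R ι) {x : V} (hx : x ∈ B.Pos) : 0 < hts B x :=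
  lt_of_lt_of_le one_pos (hts_one_le B hx)

/-- Key lemma: two distinct roots with positive inner product differ by a root. -/
lemma sub_mem_of_inner_pos (R : RootSystemData V) {x y : V} (hx : x ∈ R.Φ) (hy : y ∈ R.Φ)
    (hxy : x ≠ y) (hip : 0 < ⟪x, y⟫) : x - y ∈ R.Φ := by
  have hx0 : x ≠ 0 := R.nonzero x hx
  have hy0 : y ≠ 0 := R.nonzero y hy
  have hxx : 0 < ⟪x, x⟫ := inner_self_pos' hx0
  have hyy : 0 < ⟪y, y⟫ := inner_self_pos' hy0
  obtain ⟨n₁, hn₁⟩ := R.crystallographic y hy x hx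
  obtain ⟨n₂, hn₂⟩ := R.crystallographic x hx y hy
  have hiyx : ⟪y, x⟫ = ⟪x, y⟫ := real_inner_comm x y
  have hn₁pos : 0 < (n₁ : ℝ) := by
    rw [← hn₁]
    rw [hiyx]
    positivity
  have hn₂pos : 0 < (n₂ : ℝ) := by
    rw [← hn₂]; positivity
  have hn₁1 : 1 ≤ n₁ := by exact_mod_cast hn₁pos
  have hn₂1 : 1 ≤ n₂ := by exact_mod_cast hn₂pos
  -- case parallel
  by_cases hpar : ∃ c : ℝ, y = c • x
  · obtain ⟨c, hc⟩ := hpar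
    have hcpos : 0 < c := by
      have : ⟪x, y⟫ = c * ⟪x, x⟫ := by rw [hc, real_inner_smul_right]
      nlinarith
    rcases R.reduced x hx c (hc ▸ hy) with h1 | h1
    · exact absurd (by rw [hc, h1, one_smul]) (Ne.symm hxy)
    · linarith
  · -- strict Cauchy-Schwarz
    push_neg at hpar
    have hstrict : ⟪x, y⟫ * ⟪x, y⟫ < ⟪x, x⟫ * ⟪y, y⟫ := by
      set w := ⟪x, x⟫ • y - ⟪x, y⟫ • x with hw
      have hw0 : w ≠ 0 := by
        intro hww
        apply hpar (⟪x, y⟫ / ⟪x, x⟫)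
        have : ⟪x, x⟫ • y = ⟪x, y⟫ • x := by
          rw [hw] at hww
          have := sub_eq_zero.mp hww
          exact this
        rw [div_eq_inv_mul, ← smul_smul, ← this, smul_smul,
          inv_mul_cancel₀ (ne_of_gt hxx), one_smul]
      have hwpos : 0 < ⟪w, w⟫ := inner_self_pos' hw0
      have hexp : ⟪w, w⟫ = ⟪x, x⟫ * (⟪x, x⟫ * ⟪y, y⟫ - ⟪x, y⟫ * ⟪x, y⟫) := by
        rw [hw]
        simp only [inner_sub_left, inner_sub_right, real_inner_smul_left, real_inner_smul_right]
        rw [real_inner_comm y x]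
        ring
      nlinarith
    have hprod : (n₁ : ℝ) * n₂ < 4 := by
      have e1 : (n₁ : ℝ) * ⟪y, y⟫ = 2 * ⟪x, y⟫ := by
        rw [← hn₁, hiyx]; field_simp
      have e2 : (n₂ : ℝ) * ⟪x, x⟫ = 2 * ⟪x, y⟫ := by
        rw [← hn₂]; field_simp
      nlinarith
    have hprodZ : n₁ * n₂ ≤ 3 := by
      have : ((n₁*n₂ : ℤ) : ℝ) < 4 := by push_cast; nlinarith
      have : n₁ * n₂ < 4 := by exact_mod_cast this
      omega
    have : n₁ = 1 ∨ n₂ = 1 := by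
      by_contra hc
      push_neg at hc
      have h1 : 2 ≤ n₁ := by omega
      have h2 : 2 ≤ n₂ := by omega
      nlinarith
    rcases this with h | h
    · -- reflect x by y : x - n₁ y ∈ Φ
      have := R.reflect_mem y hy x hx
      rw [hn₁, h] at this
      simpa using this
    · have := R.reflect_mem x hx y hy
      rw [hn₂, h] at this
      have : y - x ∈ R.Φ := by simpa using this
      have := R.neg_mem _ this
      simpa using this

end FlatAux


namespace FlatAux

variable {V : Type*} [NormedAddCommGroup V] [InnerProductSpace ℝ V]
  {R : RootSystemData V} {ι : Type*} [Fintype ι]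

lemma crys (R : RootSystemData V) {x y : V} (hx : x ∈ R.Φ) (hy : y ∈ R.Φ) :
    ∃ z : ℤ, (z : ℝ) * ⟪x, x⟫ = 2 * ⟪x, y⟫ ∧ y - (z : ℝ) • x ∈ R.Φ := by
  obtain ⟨z, hz⟩ := R.crystallographic x hx y hy
  have hxx : ⟪x, x⟫ ≠ 0 := ne_of_gt (inner_self_pos' (R.nonzero x hx))
  have h1 : (z : ℝ) * ⟪x, x⟫ = 2 * ⟪x, y⟫ := by
    field_simp at hz
    linarith
  refine ⟨z, h1, ?_⟩
  have := R.reflect_mem x hx y hy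
  have he : 2 * ⟪x, y⟫ / ⟪x, x⟫ = (z : ℝ) := hz
  rwa [he] at this

/-- helper: uniqueness of coefficients wrt an independent pair -/
lemma pair_uniq {σ τ : V} (h : LinearIndependent ℝ ![σ, τ]) {a b c d : ℝ}
    (heq : a • σ + b • τ = c • σ + d • τ) : a = c ∧ b = d := by
  have h0 : (a - c) • σ + (b - d) • τ = 0 := by
    rw [sub_smul, sub_smul]
    have : a • σ - c • σ + (b • τ - d • τ) = (a • σ + b • τ) - (c • σ + d • τ) := by abel
    rw [this, heq, sub_self]
  obtain ⟨h1, h2⟩ := (LinearIndependent.pair_iff.mp h) _ _ h0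
  constructor <;> linarith

set_option maxHeartbeats 2000000 in
lemma badcase2 (B : RootBase R ι) (i : ι) (σ τ γ γ' : V) (U : Submodule ℝ V)
    (hσ : σ ∈ B.Pos) (hτ : τ ∈ B.Pos) (hσU : σ ∈ U) (hτU : τ ∈ U)
    (hindep : LinearIndependent ℝ ![σ, τ])
    (hobt : ⟪σ, τ⟫ ≤ 0)
    (hdec : ∀ x, x ∈ B.Pos → x ∈ U → ∃ p q : ℕ, x = (p:ℝ) • σ + (q:ℝ) • τ)
    (hγ : γ ∈ B.Pos) (hγ' : γ' ∈ B.Pos) (hγU : γ ∈ U) (hγ'U : γ' ∈ U)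
    (hsi : B.b.repr σ i = 0) (hti : 1 ≤ B.b.repr τ i)
    (p q p' q' : ℕ)
    (hγeq : γ = (p:ℝ) • σ + (q:ℝ) • τ) (hγ'eq : γ' = (p':ℝ) • σ + (q':ℝ) • τ)
    (hq1 : 1 ≤ q) (hq'1 : 1 ≤ q') (hpp : p' < p) (hqq : q < q') : False := by
  have hσΦ : σ ∈ R.Φ := hσ.1
  have hτΦ : τ ∈ R.Φ := hτ.1
  have hγΦ : γ ∈ R.Φ := hγ.1
  have hγ'Φ : γ' ∈ R.Φ := hγ'.1
  set A := (⟪σ, σ⟫ : ℝ) with hAdef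
  set Bv := (⟪τ, τ⟫ : ℝ) with hBdef
  set C := (⟪σ, τ⟫ : ℝ) with hCdef
  have hA : 0 < A := inner_self_pos' (R.nonzero σ hσΦ)
  have hB : 0 < Bv := inner_self_pos' (R.nonzero τ hτΦ)
  have hτσ : (⟪τ, σ⟫ : ℝ) = C := (real_inner_comm τ σ).symm
  -- m and n
  obtain ⟨m, hmA, -⟩ := crys R hσΦ hτΦ
  obtain ⟨n, hnB', -⟩ := crys R hτΦ hσΦ
  have hnB : (n : ℝ) * Bv = 2 * C := by rw [hnB', hτσ]
  -- reflection constraint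
  have hreflect : ∀ (y : V) (a b : ℕ), y ∈ R.Φ → y ∈ U →
      y = (a:ℝ) • σ + (b:ℝ) • τ → 1 ≤ B.b.repr y i → (a:ℤ) + m*(b:ℤ) ≤ 0 := by
    intro y a b hyΦ hyU hyeq hyi
    obtain ⟨z, hzA, hzΦ⟩ := crys R hσΦ hyΦ
    rw [← hAdef] at hzA
    have hIσy : (⟪σ, y⟫ : ℝ) = (a:ℝ)*A + (b:ℝ)*C := by
      rw [hyeq]
      rw [inner_add_right, real_inner_smul_right, real_inner_smul_right]
    have hzval : (z : ℝ) = 2*(a:ℝ) + (m:ℝ)*(b:ℝ) := by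
      have h2 : (z : ℝ) * A = (2*(a:ℝ) + (m:ℝ)*(b:ℝ)) * A := by
        rw [hzA, hIσy]; linear_combination (-(b:ℝ)) * hmA
      exact mul_right_cancel₀ (ne_of_gt hA) h2
    set ρ := y - (z:ℝ) • σ with hρdef
    have hρi : B.b.repr ρ i = B.b.repr y i := by
      rw [hρdef]
      rw [map_sub, map_smul]
      simp [hsi]
    have hρPos : ρ ∈ B.Pos := by
      refine ⟨hzΦ, ?_⟩
      rcases B.coord_sign ρ hzΦ with h | h
      · exact h
      · exfalso
        have := h i
        rw [hρi] at this
        linarith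
    have hρU : ρ ∈ U := Submodule.sub_mem _ hyU (Submodule.smul_mem _ _ hσU)
    obtain ⟨u, v, huv⟩ := hdec ρ hρPos hρU
    have hρeq2 : ((a:ℝ) - z) • σ + (b:ℝ) • τ = (u:ℝ) • σ + (v:ℝ) • τ := by
      rw [← huv, hρdef, hyeq]
      rw [sub_smul]
      abel
    have h1 := (pair_uniq hindep hρeq2).1
    have : (z:ℝ) ≤ (a:ℝ) := by
      have hu0 : (0:ℝ) ≤ (u:ℝ) := Nat.cast_nonneg u
      linarith
    have hza : z ≤ (a:ℤ) := by exact_mod_cast this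
    have hzz : (z:ℝ) = ((2*(a:ℤ) + m*(b:ℤ) : ℤ) : ℝ) := by push_cast; exact hzval
    have : z = 2*(a:ℤ) + m*(b:ℤ) := by exact_mod_cast hzz
    omega
  -- coordinate i of γ, γ'
  have hγi : 1 ≤ B.b.repr γ i := by
    have : B.b.repr γ i = (p:ℝ) * B.b.repr σ i + (q:ℝ) * B.b.repr τ i := by
      rw [hγeq]; rw [map_add, map_smul, map_smul]; simp
    rw [this, hsi, mul_zero, zero_add]
    have : (1:ℝ) ≤ (q:ℝ) := by exact_mod_cast hq1
    nlinarith
  have hγ'i : 1 ≤ B.b.repr γ' i := by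
    have : B.b.repr γ' i = (p':ℝ) * B.b.repr σ i + (q':ℝ) * B.b.repr τ i := by
      rw [hγ'eq]; rw [map_add, map_smul, map_smul]; simp
    rw [this, hsi, mul_zero, zero_add]
    have : (1:ℝ) ≤ (q':ℝ) := by exact_mod_cast hq'1
    nlinarith
  have hpm : (p:ℤ) + m*(q:ℤ) ≤ 0 := hreflect γ p q hγΦ hγU hγeq hγi
  have hpm' : (p':ℤ) + m*(q':ℤ) ≤ 0 := hreflect γ' p' q' hγ'Φ hγ'U hγ'eq hγ'i
  -- m ≤ -1
  have hm0 : m ≤ 0 := by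
    have hC0 : C ≤ 0 := hobt
    have h1 : (m : ℝ) * A ≤ 0 := by rw [hmA]; linarith
    have h2 : (m : ℝ) ≤ 0 := by nlinarith
    exact_mod_cast h2
  have hm1 : m ≤ -1 := by
    rcases eq_or_lt_of_le hm0 with h | h
    · exfalso; rw [h] at hpm; omega
    · omega
  have hC0 : C < 0 := by
    have : (m:ℝ) ≤ -1 := by exact_mod_cast hm1
    nlinarith
  have hn1 : n ≤ -1 := by
    have h2 : (n : ℝ) * Bv < 0 := by rw [hnB]; linarith
    have h3 : (n : ℝ) < 0 := by nlinarith
    have : n < 0 := by exact_mod_cast h3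
    omega
  -- strict Cauchy-Schwarz
  have hCS : C * C < A * Bv := by
    set w := A • τ - C • σ with hwdef
    have hw0 : w ≠ 0 := by
      intro hww
      have h0 : (-C) • σ + A • τ = 0 := by
        rw [← hww, hwdef]; module
      obtain ⟨-, h2⟩ := (LinearIndependent.pair_iff.mp hindep) _ _ h0
      exact (ne_of_gt hA) h2
    have hwpos : 0 < ⟪w, w⟫ := inner_self_pos' hw0
    have hexp : ⟪w, w⟫ = A * (A * Bv - C * C) := by
      rw [hwdef]
      simp only [inner_sub_left, inner_sub_right, real_inner_smul_left, real_inner_smul_right]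
      rw [hτσ]
      rw [← hAdef, ← hBdef, ← hCdef]
      ring
    nlinarith
  have hmn : m * n ≤ 3 := by
    have h1 : ((m*n : ℤ) : ℝ) * (A * Bv) = 4 * (C * C) := by
      push_cast
      linear_combination ((n:ℝ)*Bv) * hmA + (2*C) * hnB
    have h2 : ((m*n : ℤ) : ℝ) < 4 := by nlinarith
    have : (m*n : ℤ) < 4 := by exact_mod_cast h2
    omega
  -- the four crystallographic pairings
  have hKfact : ∀ (y : V) (a b : ℕ), y ∈ R.Φ → y = (a:ℝ) • σ + (b:ℝ) • τ →
      ∃ K1 K2 E : ℤ, E = n*(a:ℤ)^2 + m*(b:ℤ)^2 + m*n*(a:ℤ)*(b:ℤ) ∧ E ≤ -1 ∧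
        K1*E = n*(2*(a:ℤ) + m*(b:ℤ)) ∧ K2*E = m*(n*(a:ℤ) + 2*(b:ℤ)) := by
    intro y a b hyΦ hyeq
    obtain ⟨K1, hK1, -⟩ := crys R hyΦ hσΦ
    obtain ⟨K2, hK2, -⟩ := crys R hyΦ hτΦ
    set G := (⟪y, y⟫ : ℝ) with hGdef
    have hG : 0 < G := inner_self_pos' (R.nonzero y hyΦ)
    have hIyσ : (⟪y, σ⟫ : ℝ) = (a:ℝ)*A + (b:ℝ)*C := by
      rw [hyeq]
      rw [inner_add_left, real_inner_smul_left, real_inner_smul_left, hτσ, ← hAdef]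
    have hIyτ : (⟪y, τ⟫ : ℝ) = (a:ℝ)*C + (b:ℝ)*Bv := by
      rw [hyeq]
      rw [inner_add_left, real_inner_smul_left, real_inner_smul_left, ← hCdef, ← hBdef]
    have hGexp : G = (a:ℝ)^2*A + 2*(a:ℝ)*(b:ℝ)*C + (b:ℝ)^2*Bv := by
      rw [hGdef]
      conv_lhs => rw [hyeq]
      simp only [inner_add_left, inner_add_right, real_inner_smul_left, real_inner_smul_right]
      rw [hτσ, ← hAdef, ← hBdef, ← hCdef]
      ring
    refine ⟨K1, K2, n*(a:ℤ)^2 + m*(b:ℤ)^2 + m*n*(a:ℤ)*(b:ℤ), rfl, ?_, ?_, ?_⟩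
    · -- E ≤ -1
      have hEr : 2*(n:ℝ)*G = 2*A*((n*(a:ℤ)^2 + m*(b:ℤ)^2 + m*n*(a:ℤ)*(b:ℤ) : ℤ) : ℝ) := by
        push_cast
        linear_combination (2*(n:ℝ))*hGexp + (-2*(b:ℝ)^2 - 2*(n:ℝ)*(a:ℝ)*(b:ℝ))*hmA
          + (2*(b:ℝ)^2)*hnB
      have hnneg : (n:ℝ) ≤ -1 := by exact_mod_cast hn1
      have : ((n*(a:ℤ)^2 + m*(b:ℤ)^2 + m*n*(a:ℤ)*(b:ℤ) : ℤ) : ℝ) < 0 := by nlinarith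
      have : (n*(a:ℤ)^2 + m*(b:ℤ)^2 + m*n*(a:ℤ)*(b:ℤ) : ℤ) < 0 := by exact_mod_cast this
      omega
    · -- K1 equation
      have hEr : 2*(n:ℝ)*G = 2*A*((n*(a:ℤ)^2 + m*(b:ℤ)^2 + m*n*(a:ℤ)*(b:ℤ) : ℤ) : ℝ) := by
        push_cast
        linear_combination (2*(n:ℝ))*hGexp + (-2*(b:ℝ)^2 - 2*(n:ℝ)*(a:ℝ)*(b:ℝ))*hmA
          + (2*(b:ℝ)^2)*hnB
      have hreal : 2*A*(((K1 : ℝ))*((n*(a:ℤ)^2 + m*(b:ℤ)^2 + m*n*(a:ℤ)*(b:ℤ) : ℤ) : ℝ))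
          = 2*A*((n:ℝ)*(2*(a:ℝ) + (m:ℝ)*(b:ℝ))) := by
        push_cast
        push_cast at hEr
        linear_combination (-(K1:ℝ))*hEr + (2*(n:ℝ))*hK1 + (4*(n:ℝ))*hIyσ
          + (-2*(n:ℝ)*(b:ℝ))*hmA
      have h2 := mul_left_cancel₀ (show (2*A) ≠ 0 by positivity) hreal
      have h3 : ((K1*(n*(a:ℤ)^2 + m*(b:ℤ)^2 + m*n*(a:ℤ)*(b:ℤ)) : ℤ) : ℝ)
          = ((n*(2*(a:ℤ) + m*(b:ℤ)) : ℤ) : ℝ) := by push_cast; push_cast at h2; linarith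
      exact_mod_cast h3
    · -- K2 equation
      have hEr : 2*(n:ℝ)*G = 2*A*((n*(a:ℤ)^2 + m*(b:ℤ)^2 + m*n*(a:ℤ)*(b:ℤ) : ℤ) : ℝ) := by
        push_cast
        linear_combination (2*(n:ℝ))*hGexp + (-2*(b:ℝ)^2 - 2*(n:ℝ)*(a:ℝ)*(b:ℝ))*hmA
          + (2*(b:ℝ)^2)*hnB
      have hreal : 2*A*(((K2 : ℝ))*((n*(a:ℤ)^2 + m*(b:ℤ)^2 + m*n*(a:ℤ)*(b:ℤ) : ℤ) : ℝ))
          = 2*A*((m:ℝ)*((n:ℝ)*(a:ℝ) + 2*(b:ℝ))) := by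
        push_cast
        push_cast at hEr
        linear_combination (-(K2:ℝ))*hEr + (2*(n:ℝ))*hK2 + (4*(n:ℝ))*hIyτ
          + (-2*(n:ℝ)*(a:ℝ) - 4*(b:ℝ))*hmA + (4*(b:ℝ))*hnB
      have h2 := mul_left_cancel₀ (show (2*A) ≠ 0 by positivity) hreal
      have h3 : ((K2*(n*(a:ℤ)^2 + m*(b:ℤ)^2 + m*n*(a:ℤ)*(b:ℤ)) : ℤ) : ℝ)
          = ((m*(n*(a:ℤ) + 2*(b:ℤ)) : ℤ) : ℝ) := by push_cast; push_cast at h2; linarith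
      exact_mod_cast h3
  obtain ⟨K1, K2, E, hE, hEneg, h1, h2⟩ := hKfact γ p q hγΦ hγeq
  obtain ⟨K1', K2', E', hE', hE'neg, h1', h2'⟩ := hKfact γ' p' q' hγ'Φ hγ'eq
  -- p' ≥ 1
  have hp'1 : 1 ≤ p' := by
    by_contra hc
    push_neg at hc
    have hp'0 : p' = 0 := by omega
    have : γ' = (q':ℝ) • τ := by rw [hγ'eq, hp'0]; simp
    rcases R.reduced τ hτΦ (q':ℝ) (this ▸ hγ'Φ) with h | h
    · have : q' = 1 := by exact_mod_cast h
      omega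
    · have : (0:ℝ) ≤ (q':ℝ) := Nat.cast_nonneg q'
      rw [h] at this
      linarith
  exact arith m n p q p' q' K1 K2 K1' K2' E E' hm1 hn1 hmn
    (by exact_mod_cast hq1) (by exact_mod_cast hp'1) (by exact_mod_cast hpp)
    (by exact_mod_cast hqq) hpm hpm' hE hE' hEneg hE'neg h1 h2 h1' h2'

set_option maxHeartbeats 1000000 in
lemma badcase (B : RootBase R ι) (i : ι) (σ τ γ γ' : V) (U : Submodule ℝ V)
    (hσ : σ ∈ B.Pos) (hτ : τ ∈ B.Pos) (hσU : σ ∈ U) (hτU : τ ∈ U)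
    (hindep : LinearIndependent ℝ ![σ, τ])
    (hobt : ⟪σ, τ⟫ ≤ 0)
    (hdec : ∀ x, x ∈ B.Pos → x ∈ U → ∃ p q : ℕ, x = (p:ℝ) • σ + (q:ℝ) • τ)
    (hγ : γ ∈ B.Pos) (hγ' : γ' ∈ B.Pos) (hγU : γ ∈ U) (hγ'U : γ' ∈ U)
    (hγi : 1 ≤ B.b.repr γ i) (hγ'i : 1 ≤ B.b.repr γ' i)
    (hinc1 : ¬ B.rle γ γ') (hinc2 : ¬ B.rle γ' γ)
    (hsi : B.b.repr σ i = 0) (hti : 1 ≤ B.b.repr τ i) : False := by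
  obtain ⟨p, q, hγeq⟩ := hdec γ hγ hγU
  obtain ⟨p', q', hγ'eq⟩ := hdec γ' hγ' hγ'U
  -- q, q' ≥ 1
  have hrep : ∀ (y : V) (a b : ℕ), y = (a:ℝ) • σ + (b:ℝ) • τ →
      ∀ j, B.b.repr y j = (a:ℝ) * B.b.repr σ j + (b:ℝ) * B.b.repr τ j := by
    intro y a b hyeq j
    rw [hyeq, map_add, map_smul, map_smul]
    simp
  have hq1 : 1 ≤ q := by
    by_contra hc
    push_neg at hc
    have hq0 : q = 0 := by omega
    have := hrep γ p q hγeq i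
    rw [hq0, hsi] at this
    simp at this
    rw [this] at hγi
    linarith
  have hq'1 : 1 ≤ q' := by
    by_contra hc
    push_neg at hc
    have hq0 : q' = 0 := by omega
    have := hrep γ' p' q' hγ'eq i
    rw [hq0, hsi] at this
    simp at this
    rw [this] at hγ'i
    linarith
  -- comparability from coefficients
  have hcmp : ∀ (x y : V) (a b c d : ℕ), x = (a:ℝ) • σ + (b:ℝ) • τ →
      y = (c:ℝ) • σ + (d:ℝ) • τ → a ≤ c → b ≤ d → B.rle x y := by
    intro x y a b c d hx hy hac hbd j
    rw [hrep x a b hx j, hrep y c d hy j]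
    have h1 : (a:ℝ) ≤ (c:ℝ) := by exact_mod_cast hac
    have h2 : (b:ℝ) ≤ (d:ℝ) := by exact_mod_cast hbd
    have h3 : 0 ≤ B.b.repr σ j := hσ.2 j
    have h4 : 0 ≤ B.b.repr τ j := hτ.2 j
    nlinarith
  have hmix1 : ¬(p ≤ p' ∧ q ≤ q') := by
    rintro ⟨h1, h2⟩
    exact hinc1 (hcmp γ γ' p q p' q' hγeq hγ'eq h1 h2)
  have hmix2 : ¬(p' ≤ p ∧ q' ≤ q) := by
    rintro ⟨h1, h2⟩
    exact hinc2 (hcmp γ' γ p' q' p q hγ'eq hγeq h1 h2)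
  have hcase : (p' < p ∧ q < q') ∨ (p < p' ∧ q' < q) := by omega
  rcases hcase with ⟨h1, h2⟩ | ⟨h1, h2⟩
  · exact badcase2 B i σ τ γ γ' U hσ hτ hσU hτU hindep hobt hdec hγ hγ' hγU hγ'U
      hsi hti p q p' q' hγeq hγ'eq hq1 hq'1 h1 h2
  · exact badcase2 B i σ τ γ' γ U hσ hτ hσU hτU hindep hobt hdec hγ' hγ hγ'U hγU
      hsi hti p' q' p q hγ'eq hγeq hq'1 hq1 h1 h2


lemma hts_smul (B : RootBase R ι) (c : ℝ) (x : V) : hts B (c • x) = c * hts B x := by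
  simp [hts, Finset.mul_sum]

set_option maxHeartbeats 2000000 in
lemma key (B : RootBase R ι) (i : ι) (γ γ' : V)
    (hγ : γ ∈ B.Pos) (hγ' : γ' ∈ B.Pos)
    (hγi : 1 ≤ B.b.repr γ i) (hγ'i : 1 ≤ B.b.repr γ' i)
    (hinc1 : ¬ B.rle γ γ') (hinc2 : ¬ B.rle γ' γ) :
    LinearIndependent ℝ ![γ, γ'] ∧
    ∀ δ, δ ∈ B.Pos → δ ∈ Submodule.span ℝ ({γ, γ'} : Set V) → 1 ≤ B.b.repr δ i := by
  have hγ0 : γ ≠ 0 := R.nonzero γ hγ.1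
  have hγ'0 : γ' ≠ 0 := R.nonzero γ' hγ'.1
  -- linear independence of γ, γ'
  have hind : LinearIndependent ℝ ![γ, γ'] := by
    rw [LinearIndependent.pair_iff]
    intro s t hst
    by_cases hs : s = 0
    · subst hs
      rw [zero_smul, zero_add] at hst
      rcases smul_eq_zero.mp hst with h | h
      · exact ⟨rfl, h⟩
      · exact absurd h hγ'0
    · exfalso
      have hγeq : γ = (-t/s) • γ' := by
        have h1 : s • γ = -(t • γ') := by rw [← sub_eq_zero, sub_neg_eq_add, hst]
        have h2 : (-t/s) • γ' = γ := by
          rw [div_eq_inv_mul, ← smul_smul, neg_smul, ← h1, smul_smul,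
            inv_mul_cancel₀ hs, one_smul]
        exact h2.symm
      set c := -t/s with hc
      have hrep : ∀ j, B.b.repr γ j = c * B.b.repr γ' j := by
        intro j
        rw [hγeq, map_smul]
        simp
      rcases le_or_gt 1 c with h | h
      · apply hinc2
        intro j
        rw [hrep j]
        nlinarith [hγ'.2 j]
      · apply hinc1
        intro j
        rw [hrep j]
        nlinarith [hγ'.2 j]
  set U := Submodule.span ℝ ({γ, γ'} : Set V) with hUdef
  have hγU : γ ∈ U := Submodule.subset_span (Set.mem_insert _ _)
  have hγ'U : γ' ∈ U := Submodule.subset_span (Set.mem_insert_of_mem _ rfl)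
  set P : Set V := {x | x ∈ B.Pos ∧ x ∈ U} with hPdef
  have hγP : γ ∈ P := ⟨hγ, hγU⟩
  have hγ'P : γ' ∈ P := ⟨hγ', hγ'U⟩
  set Δ : Set V := {x | x ∈ P ∧ ¬ ∃ y, y ∈ P ∧ ∃ z, z ∈ P ∧ x = y + z} with hΔdef
  -- pairwise obtuse
  have hobtuse : ∀ u v, u ∈ Δ → v ∈ Δ → u ≠ v → ⟪u, v⟫ ≤ 0 := by
    intro u v hu hv hne
    by_contra hc
    push_neg at hc
    have huv : u - v ∈ R.Φ := sub_mem_of_inner_pos R hu.1.1.1 hv.1.1.1 hne hc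
    have huvU : u - v ∈ U := Submodule.sub_mem _ hu.1.2 hv.1.2
    rcases B.coord_sign (u - v) huv with h | h
    · exact hu.2 ⟨v, hv.1, u - v, ⟨⟨huv, h⟩, huvU⟩, by abel⟩
    · have hvu : v - u ∈ R.Φ := by
        have := R.neg_mem _ huv
        rwa [neg_sub] at this
      have hvuc : ∀ j, 0 ≤ B.b.repr (v - u) j := by
        intro j
        have := h j
        rw [map_sub] at this ⊢
        simp only [Finsupp.coe_sub, Pi.sub_apply] at this ⊢
        linarith
      exact hv.2 ⟨u, hu.1, v - u, ⟨⟨hvu, hvuc⟩, Submodule.sub_mem _ hv.1.2 hu.1.2⟩, by abel⟩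
  -- independence of distinct pairs in Δ
  have hpair : ∀ u v, u ∈ Δ → v ∈ Δ → u ≠ v → LinearIndependent ℝ ![u, v] := by
    intro u v hu hv hne
    rw [LinearIndependent.pair_iff]
    intro s t hst
    have huu : 0 < ⟪u, u⟫ := inner_self_pos' (R.nonzero u hu.1.1.1)
    have hvv : 0 < ⟪v, v⟫ := inner_self_pos' (R.nonzero v hv.1.1.1)
    have hobt := hobtuse u v hu hv hne
    have hobt' : ⟪v, u⟫ ≤ 0 := by rw [real_inner_comm]; exact hobt
    have hhu : 1 ≤ hts B u := hts_one_le B hu.1.1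
    have hhv : 1 ≤ hts B v := hts_one_le B hv.1.1
    have hhts : s * hts B u + t * hts B v = 0 := by
      rw [← hts_smul, ← hts_smul, ← hts_add, hst]
      simp [hts]
    have hinner : s * ⟪u, u⟫ + t * ⟪v, u⟫ = 0 := by
      have : ⟪s • u + t • v, u⟫ = (0:ℝ) := by rw [hst, inner_zero_left]
      rw [inner_add_left, real_inner_smul_left, real_inner_smul_left] at this
      linarith
    rcases lt_trichotomy s 0 with h | h | h
    · exfalso
      have ht : t < 0 := by nlinarith
      nlinarith
    · subst h
      rw [zero_smul, zero_add] at hst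
      rcases smul_eq_zero.mp hst with h | h
      · exact ⟨rfl, h⟩
      · exact absurd h (R.nonzero v hv.1.1.1)
    · exfalso
      have ht : 0 < t := by nlinarith
      nlinarith
  -- every element of P is in the span of Δ
  have hspanΔ : ∀ x, x ∈ P → x ∈ Submodule.span ℝ Δ := by
    have aux : ∀ N : ℕ, ∀ x, x ∈ P → hts B x ≤ N → x ∈ Submodule.span ℝ Δ := by
      intro N
      induction N with
      | zero =>
        intro x hx hb
        exfalso
        have := hts_one_le B hx.1
        simp at hb
        linarith
      | succ N ih =>
        intro x hx hb
        by_cases hxd : x ∈ Δ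
        · exact Submodule.subset_span hxd
        · have : ¬ (x ∈ P ∧ ¬ ∃ y, y ∈ P ∧ ∃ z, z ∈ P ∧ x = y + z) := hxd
          push_neg at this
          obtain ⟨y, hy, z, hz, hxyz⟩ := this hx
          have hhy : 1 ≤ hts B y := hts_one_le B hy.1
          have hhz : 1 ≤ hts B z := hts_one_le B hz.1
          have hsum : hts B x = hts B y + hts B z := by rw [hxyz, hts_add]
          have hby : hts B y ≤ N := by push_cast at hb ⊢; linarith
          have hbz : hts B z ≤ N := by push_cast at hb ⊢; linarith
          rw [hxyz]
          exact Submodule.add_mem _ (ih y hy hby) (ih z hz hbz)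
    intro x hx
    obtain ⟨N, hN⟩ := exists_nat_ge (hts B x)
    exact aux N x hx hN
  -- Δ contains two distinct elements σ τ
  have hex : ∃ σ, σ ∈ Δ ∧ ∃ τ, τ ∈ Δ ∧ σ ≠ τ := by
    by_contra hc
    push_neg at hc
    have hγs := hspanΔ γ hγP
    have hγ's := hspanΔ γ' hγ'P
    rcases Set.eq_empty_or_nonempty Δ with hem | ⟨u₀, hu₀⟩
    · rw [hem] at hγs
      simp [Submodule.span_empty] at hγs
      exact hγ0 hγs
    · have hsub : Δ ⊆ {u₀} := by
        intro x hx
        rw [hc x hx u₀ hu₀]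
        rfl
      have h1 : γ ∈ Submodule.span ℝ ({u₀} : Set V) :=
        Submodule.span_mono hsub hγs
      have h2 : γ' ∈ Submodule.span ℝ ({u₀} : Set V) :=
        Submodule.span_mono hsub hγ's
      obtain ⟨a, ha⟩ := Submodule.mem_span_singleton.mp h1
      obtain ⟨c, hcc⟩ := Submodule.mem_span_singleton.mp h2
      have h0 : c • γ + (-a) • γ' = 0 := by
        rw [← ha, ← hcc, smul_smul, neg_smul, smul_smul]
        rw [mul_comm]
        abel
      obtain ⟨hc0, -⟩ := (LinearIndependent.pair_iff.mp hind) _ _ h0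
      rw [hc0, zero_smul] at hcc
      exact hγ'0 hcc.symm
  obtain ⟨σ, hσΔ, τ, hτΔ, hστ⟩ := hex
  have hσP : σ ∈ P := hσΔ.1
  have hτP : τ ∈ P := hτΔ.1
  have hστ_ind : LinearIndependent ℝ ![σ, τ] := hpair σ τ hσΔ hτΔ hστ
  -- span {σ, τ} = U
  haveI : FiniteDimensional ℝ U := FiniteDimensional.span_of_finite ℝ (Set.toFinite _)
  have hrangeγ : ({γ, γ'} : Set V) = Set.range ![γ, γ'] := by
    simp [Matrix.range_cons, Matrix.range_empty, Set.pair_comm]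
  have hrangeσ : ({σ, τ} : Set V) = Set.range ![σ, τ] := by
    simp [Matrix.range_cons, Matrix.range_empty, Set.pair_comm]
  have hfrU : Module.finrank ℝ U = 2 := by
    rw [hUdef, hrangeγ, finrank_span_eq_card hind]
    simp
  have hfrστ : Module.finrank ℝ (Submodule.span ℝ ({σ, τ} : Set V)) = 2 := by
    rw [hrangeσ, finrank_span_eq_card hστ_ind]
    simp
  have hle : Submodule.span ℝ ({σ, τ} : Set V) ≤ U := by
    rw [Submodule.span_le]
    rintro x (rfl | rfl)
    · exact hσP.2
    · exact hτP.2
  have hspan2 : Submodule.span ℝ ({σ, τ} : Set V) = U := by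
    apply Submodule.eq_of_le_of_finrank_le hle
    rw [hfrU, hfrστ]
  -- no third element of Δ
  have hΔsub : ∀ w, w ∈ Δ → w = σ ∨ w = τ := by
    intro w hw
    by_contra hcon
    push_neg at hcon
    obtain ⟨hwσ, hwτ⟩ := hcon
    have hwU : w ∈ U := hw.1.2
    rw [← hspan2] at hwU
    obtain ⟨a, b, hab⟩ := Submodule.mem_span_pair.mp hwU
    have ho1 : ⟪w, σ⟫ ≤ 0 := hobtuse w σ hw hσΔ hwσ
    have ho2 : ⟪w, τ⟫ ≤ 0 := hobtuse w τ hw hτΔ hwτ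
    have ho3 : ⟪τ, σ⟫ ≤ 0 := by rw [real_inner_comm]; exact hobtuse σ τ hσΔ hτΔ hστ
    have ho3' : ⟪σ, τ⟫ ≤ 0 := hobtuse σ τ hσΔ hτΔ hστ
    have hhw : 1 ≤ hts B w := hts_one_le B hw.1.1
    have hhσ : 1 ≤ hts B σ := hts_one_le B hσP.1
    have hhτ : 1 ≤ hts B τ := hts_one_le B hτP.1
    have hσσ : 0 < ⟪σ, σ⟫ := inner_self_pos' (R.nonzero σ hσP.1.1)
    have hττ : 0 < ⟪τ, τ⟫ := inner_self_pos' (R.nonzero τ hτP.1.1)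
    have hhts : a * hts B σ + b * hts B τ = hts B w := by
      rw [← hts_smul, ← hts_smul, ← hts_add, hab]
    have hiσ : a * ⟪σ, σ⟫ + b * ⟪τ, σ⟫ = ⟪w, σ⟫ := by
      rw [← hab, inner_add_left, real_inner_smul_left, real_inner_smul_left]
    have hiτ : a * ⟪σ, τ⟫ + b * ⟪τ, τ⟫ = ⟪w, τ⟫ := by
      rw [← hab, inner_add_left, real_inner_smul_left, real_inner_smul_left]
    have hapos : 0 < a ∨ 0 < b := by
      by_contra hcc
      push_neg at hcc
      nlinarith [hcc.1, hcc.2]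
    have hab_pos : 0 < a ∧ 0 < b := by
      rcases hapos with h | h
      · refine ⟨h, ?_⟩
        by_contra hb
        push_neg at hb
        nlinarith
      · refine ⟨?_, h⟩
        by_contra ha'
        push_neg at ha'
        nlinarith
    have hww : ⟪w, w⟫ ≤ 0 := by
      have hexp : ⟪w, w⟫ = a * ⟪σ, w⟫ + b * ⟪τ, w⟫ := by
        nth_rewrite 1 [← hab]
        rw [inner_add_left, real_inner_smul_left, real_inner_smul_left]
      rw [hexp, real_inner_comm w σ, real_inner_comm w τ]
      nlinarith [hab_pos.1, hab_pos.2]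
    have : w = 0 := real_inner_self_nonpos.mp hww
    rw [this] at hhw
    simp [hts] at hhw
    linarith
  -- decomposition into ℕ-combinations of σ and τ
  have hdec : ∀ x, x ∈ B.Pos → x ∈ U → ∃ p q : ℕ, x = (p:ℝ) • σ + (q:ℝ) • τ := by
    have aux : ∀ N : ℕ, ∀ x, x ∈ P → hts B x ≤ N →
        ∃ p q : ℕ, x = (p:ℝ) • σ + (q:ℝ) • τ := by
      intro N
      induction N with
      | zero =>
        intro x hx hb
        exfalso
        have := hts_one_le B hx.1
        simp at hb
        linarith
      | succ N ih =>
        intro x hx hb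
        by_cases hxd : x ∈ Δ
        · rcases hΔsub x hxd with rfl | rfl
          · exact ⟨1, 0, by simp⟩
          · exact ⟨0, 1, by simp⟩
        · have : ¬ (x ∈ P ∧ ¬ ∃ y, y ∈ P ∧ ∃ z, z ∈ P ∧ x = y + z) := hxd
          push_neg at this
          obtain ⟨y, hy, z, hz, hxyz⟩ := this hx
          have hhy : 1 ≤ hts B y := hts_one_le B hy.1
          have hhz : 1 ≤ hts B z := hts_one_le B hz.1
          have hsum : hts B x = hts B y + hts B z := by rw [hxyz, hts_add]
          have hby : hts B y ≤ N := by push_cast at hb ⊢; linarith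
          have hbz : hts B z ≤ N := by push_cast at hb ⊢; linarith
          obtain ⟨p₁, q₁, hy'⟩ := ih y hy hby
          obtain ⟨p₂, q₂, hz'⟩ := ih z hz hbz
          refine ⟨p₁ + p₂, q₁ + q₂, ?_⟩
          rw [hxyz, hy', hz']
          push_cast
          module
    intro x hx hxU
    obtain ⟨N, hN⟩ := exists_nat_ge (hts B x)
    exact aux N x ⟨hx, hxU⟩ hN
  refine ⟨hind, ?_⟩
  -- now the coordinate-i analysis
  have hsint : ∃ ns : ℤ, B.b.repr σ i = (ns:ℝ) := B.coord_int σ hσP.1.1 i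
  have htint : ∃ nt : ℤ, B.b.repr τ i = (nt:ℝ) := B.coord_int τ hτP.1.1 i
  have hs0 : 0 ≤ B.b.repr σ i := hσP.1.2 i
  have ht0 : 0 ≤ B.b.repr τ i := hτP.1.2 i
  have hzero_or_one : ∀ (x : V), x ∈ B.Pos → B.b.repr x i = 0 ∨ 1 ≤ B.b.repr x i := by
    intro x hx
    obtain ⟨nx, hnx⟩ := B.coord_int x hx.1 i
    have h0 : 0 ≤ B.b.repr x i := hx.2 i
    rw [hnx] at h0 ⊢
    have : 0 ≤ nx := by exact_mod_cast h0
    rcases eq_or_lt_of_le this with h | h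
    · left; rw [← h]; simp
    · right; exact_mod_cast h
  -- not both σ, τ have zero i-coordinate
  have hτσ_ind : LinearIndependent ℝ ![τ, σ] := by
    rw [LinearIndependent.pair_iff]
    intro s t hst
    have h0 : t • σ + s • τ = 0 := by rw [← hst]; abel
    obtain ⟨h1, h2⟩ := (LinearIndependent.pair_iff.mp hστ_ind) _ _ h0
    exact ⟨h2, h1⟩
  have hdec' : ∀ x, x ∈ B.Pos → x ∈ U → ∃ p q : ℕ, x = (p:ℝ) • τ + (q:ℝ) • σ := by
    intro x hx hxU
    obtain ⟨p, q, h⟩ := hdec x hx hxU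
    exact ⟨q, p, by rw [h]; abel⟩
  have hst1 : 1 ≤ B.b.repr σ i ∧ 1 ≤ B.b.repr τ i := by
    rcases hzero_or_one σ hσP.1 with hσz | hσ1
    · exfalso
      rcases hzero_or_one τ hτP.1 with hτz | hτ1
      · -- both zero: contradicts hγi
        obtain ⟨p, q, hγe⟩ := hdec γ hγ hγU
        have : B.b.repr γ i = 0 := by
          rw [hγe, map_add, map_smul, map_smul]
          simp [hσz, hτz]
        linarith
      · exact badcase B i σ τ γ γ' U hσP.1 hτP.1 hσP.2 hτP.2 hστ_ind
          (hobtuse σ τ hσΔ hτΔ hστ) hdec hγ hγ' hγU hγ'U hγi hγ'i hinc1 hinc2 hσz hτ1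
    · rcases hzero_or_one τ hτP.1 with hτz | hτ1
      · exfalso
        exact badcase B i τ σ γ γ' U hτP.1 hσP.1 hτP.2 hσP.2 hτσ_ind
          (by rw [real_inner_comm]; exact hobtuse σ τ hσΔ hτΔ hστ) hdec' hγ hγ' hγU hγ'U
          hγi hγ'i hinc1 hinc2 hτz hσ1
      · exact ⟨hσ1, hτ1⟩
  intro δ hδ hδU
  obtain ⟨p, q, hδe⟩ := hdec δ hδ hδU
  have hδ0 : δ ≠ 0 := R.nonzero δ hδ.1
  have hpq : 1 ≤ p ∨ 1 ≤ q := by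
    by_contra hcc
    push_neg at hcc
    have hp0 : p = 0 := by omega
    have hq0 : q = 0 := by omega
    rw [hp0, hq0] at hδe
    simp at hδe
    exact hδ0 hδe
  have hrepδ : B.b.repr δ i = (p:ℝ) * B.b.repr σ i + (q:ℝ) * B.b.repr τ i := by
    rw [hδe, map_add, map_smul, map_smul]
    simp
  rw [hrepδ]
  have hp0 : (0:ℝ) ≤ (p:ℝ) := Nat.cast_nonneg p
  have hq0 : (0:ℝ) ≤ (q:ℝ) := Nat.cast_nonneg q
  rcases hpq with h | h
  · have : (1:ℝ) ≤ (p:ℝ) := by exact_mod_cast h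
    nlinarith [hst1.1, hst1.2]
  · have : (1:ℝ) ≤ (q:ℝ) := by exact_mod_cast h
    nlinarith [hst1.1, hst1.2]


end FlatAux

/-- If the order filter of an ideal I generated by a simple root contains two incomparable
elements, then it contains an entire 2-flat of I. -/
theorem filter_incomparable_flat {V : Type*} [NormedAddCommGroup V] [InnerProductSpace ℝ V]
    {ι : Type*} [Fintype ι] (R : RootSystemData V) (B : RootBase R ι)
    (I : Set V) (hI : I ⊆ B.Pos)
    (hideal : ∀ γ ∈ I, ∀ δ, B.IsPos δ → B.rle δ γ → δ ∈ I)
    (i : ι) (F : Set V) (hF : F = {γ ∈ I | B.rle (B.b i) γ})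
    (hinc : ∃ γ ∈ F, ∃ γ' ∈ F, ¬ B.rle γ γ' ∧ ¬ B.rle γ' γ) :
    ∃ γ ∈ F, ∃ γ' ∈ F,
      Module.finrank ℝ (Submodule.span ℝ ({γ, γ'} : Set V)) = 2 ∧
      I ∩ (Submodule.span ℝ ({γ, γ'} : Set V) : Set V) ⊆ F := by
  subst hF
  obtain ⟨γ, hγF, γ', hγ'F, h1, h2⟩ := hinc
  have hγI : γ ∈ I := hγF.1
  have hγ'I : γ' ∈ I := hγ'F.1
  have hγPos : γ ∈ B.Pos := hI hγI
  have hγ'Pos : γ' ∈ B.Pos := hI hγ'I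
  have hbii : B.b.repr (B.b i) i = 1 := by
    rw [Module.Basis.repr_self]
    exact Finsupp.single_eq_same
  have hγi : 1 ≤ B.b.repr γ i := by
    have := hγF.2 i
    rwa [hbii] at this
  have hγ'i : 1 ≤ B.b.repr γ' i := by
    have := hγ'F.2 i
    rwa [hbii] at this
  obtain ⟨hind, hall⟩ := FlatAux.key B i γ γ' hγPos hγ'Pos hγi hγ'i h1 h2
  refine ⟨γ, hγF, γ', hγ'F, ?_, ?_⟩
  · have hrange : ({γ, γ'} : Set V) = Set.range ![γ, γ'] := by
      simp [Matrix.range_cons, Matrix.range_empty, Set.pair_comm]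
    rw [hrange, finrank_span_eq_card hind]
    simp
  · rintro δ ⟨hδI, hδU⟩
    have hδPos : δ ∈ B.Pos := hI hδI
    have hδi : 1 ≤ B.b.repr δ i := hall δ hδPos hδU
    refine ⟨hδI, fun j => ?_⟩
    by_cases hj : j = i
    · subst hj
      rwa [hbii]
    · have h0 : B.b.repr (B.b i) j = 0 := by
        classical
        rw [Module.Basis.repr_self, Finsupp.single_apply, if_neg (fun h => hj h.symm)]
      rw [h0]
      exact hδPos.2 j
end

section
/- Every order ideal of a chain peelable finite poset is chain peelable. -/
/-- A set `s` (with order relation `r`) is *chain peelable* if it is a chain, or an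
order filter of `s` which is a chain containing a minimal element of `s` can be removed,
leaving a chain peelable set. -/
inductive ChainPeelable {α : Type*} (r : α → α → Prop) : Set α → Prop
  | chain (s : Set α) (h : IsChain r s) : ChainPeelable r s
  | peel (s F : Set α) (hFs : F ⊆ s) (hchain : IsChain r F)
      (hfilter : ∀ x ∈ F, ∀ y ∈ s, r x y → y ∈ F)
      (hmin : ∃ m ∈ F, ∀ y ∈ s, r y m → y = m)
      (hrest : ChainPeelable r (s \ F)) : ChainPeelable r s

/-- Every order ideal of a chain peelable finite poset is chain peelable. -/
theorem chainPeelable_of_ideal {α : Type*} [PartialOrder α]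
    (s I : Set α) (hfin : s.Finite) (hIs : I ⊆ s)
    (hideal : ∀ x ∈ I, ∀ y ∈ s, y ≤ x → y ∈ I)
    (h : ChainPeelable (· ≤ ·) s) : ChainPeelable (· ≤ ·) I := by
  clear hfin
  induction h generalizing I with
  | chain s hs =>
      exact ChainPeelable.chain I (hs.mono hIs)
  | peel s F hFs hchain hfilter hmin hrest ih =>
      by_cases hIF : (I ∩ F).Nonempty
      · obtain ⟨m, hmF, hmmin⟩ := hmin
        have hmI : m ∈ I := by
          obtain ⟨x, hxI, hxF⟩ := hIF
          rcases eq_or_ne x m with rfl | hne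
          · exact hxI
          · rcases hchain hmF hxF (Ne.symm hne) with h1 | h2
            · exact hideal x hxI m (hFs hmF) h1
            · exact absurd (hmmin x (hIs hxI) h2) hne
        refine ChainPeelable.peel I (I ∩ F) Set.inter_subset_left
          (hchain.mono Set.inter_subset_right)
          ?_ ⟨m, ⟨hmI, hmF⟩, fun y hy hym => hmmin y (hIs hy) hym⟩ ?_
        · intro x hx y hy hxy
          exact ⟨hy, hfilter x hx.2 y (hIs hy) hxy⟩
        · have hd : I \ (I ∩ F) = I \ F := by
            ext z; simp [Set.mem_diff]
          rw [hd]
          refine ih (I \ F) (fun z hz => ⟨hIs hz.1, hz.2⟩) ?_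
          intro x hx y hy hyx
          exact ⟨hideal x hx.1 y hy.1 hyx, hy.2⟩
      · refine ih I (fun z hz => ⟨hIs hz, fun hzF => hIF ⟨z, hz, hzF⟩⟩) ?_
        intro x hx y hy hyx
        exact hideal x hx y hy.1 hyx
end
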